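/- arXiv:1709.08701 — 7 statements merged into one kernel-verified Lean document; each statement's English description precedes it below -/
import Mathlib

section
/- Let m = x_j^{a_j} e_j^{b_j} e_{j+1}^{b_{j+1}} ⋯ e_{j+2k}^{b_{j+2k}} x_{j+2k+1}^{a_{j+2k+1}} be a monomial in k[x_1,…,x_{2n+1}] (indices taken modulo 2n+1 along the cycle C_{2n+1}), where a_j ≥ 1 and a_{j+2k+1} ≥ 1. If b_{j+2h+1} ≥ 1 for all h ∈ {0,…,k−1}, then this factorization of m is not optimal; that is, b(m) > b_j + b_{j+1} + ⋯ + b_{j+2k}. -/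
open MvPolynomial
open Fin.NatCast

noncomputable section

/-- The ideal generated by the variables indexed by `S`. -/
def varIdeal (K : Type*) [Field K] (N : ℕ) (S : Finset (Fin N)) :
    Ideal (MvPolynomial (Fin N) K) :=
  Ideal.span ((fun i => (X i : MvPolynomial (Fin N) K)) '' S)

/-- The edge ideal of a graph `G`, generated by `X i * X j` for edges `{i, j}`. -/
def edgeIdeal (K : Type*) [Field K] {N : ℕ} (G : SimpleGraph (Fin N)) :
    Ideal (MvPolynomial (Fin N) K) :=
  Ideal.span {p | ∃ i j, G.Adj i j ∧ p = X i * X j}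

/-- `S` is a vertex cover of `G`: every edge meets `S`. -/
def IsVertexCover {N : ℕ} (G : SimpleGraph (Fin N)) (S : Finset (Fin N)) : Prop :=
  ∀ ⦃i j : Fin N⦄, G.Adj i j → i ∈ S ∨ j ∈ S

/-- `S` is a minimal vertex cover of `G`. -/
def IsMinVertexCover {N : ℕ} (G : SimpleGraph (Fin N)) (S : Finset (Fin N)) : Prop :=
  IsVertexCover G S ∧ ∀ T ⊂ S, ¬ IsVertexCover G T

/-- The `t`-th symbolic power of the edge ideal of `G`:
the intersection of the `t`-th powers of the minimal vertex cover primes. -/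
def symbolicPower (K : Type*) [Field K] {N : ℕ} (G : SimpleGraph (Fin N)) (t : ℕ) :
    Ideal (MvPolynomial (Fin N) K) :=
  ⨅ (S : Finset (Fin N)) (_ : IsMinVertexCover G S), varIdeal K N S ^ t

/-- The cycle graph on `Fin m`, with edges `{i, i+1 mod m}`. -/
def cycleGraph (m : ℕ) : SimpleGraph (Fin m) :=
  SimpleGraph.fromRel (fun i j => (j : ℕ) = ((i : ℕ) + 1) % m)

/-- The set `L(t)` of monomials of degree at least `2t` whose weight with respect to every
minimal vertex cover is at least `t`. -/
def Lset (K : Type*) [Field K] {N : ℕ} (G : SimpleGraph (Fin N)) (t : ℕ) :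
    Set (MvPolynomial (Fin N) K) :=
  {p | ∃ a : Fin N →₀ ℕ, p = monomial a 1 ∧ 2 * t ≤ ∑ i, a i ∧
    ∀ S : Finset (Fin N), IsMinVertexCover G S → t ≤ ∑ i ∈ S, a i}

/-- The set `D(t)` of monomials of degree less than `2t` whose weight with respect to every
minimal vertex cover is at least `t`. -/
def Dset (K : Type*) [Field K] {N : ℕ} (G : SimpleGraph (Fin N)) (t : ℕ) :
    Set (MvPolynomial (Fin N) K) :=
  {p | ∃ a : Fin N →₀ ℕ, p = monomial a 1 ∧ (∑ i, a i) < 2 * t ∧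
    ∀ S : Finset (Fin N), IsMinVertexCover G S → t ≤ ∑ i ∈ S, a i}

/-- `α(J)`: the least total degree of a nonzero polynomial in `J`. -/
def alphaDeg {K : Type*} [Field K] {N : ℕ} (J : Ideal (MvPolynomial (Fin N) K)) : ℕ :=
  sInf {d | ∃ f ∈ J, f ≠ 0 ∧ f.totalDegree = d}

/-- The symbolic defect: the minimal number of generators one must add to `I(G)^t`
to obtain the symbolic power `I(G)^(t)`. -/
def sdefect (K : Type*) [Field K] {N : ℕ} (G : SimpleGraph (Fin N)) (t : ℕ) : ℕ :=
  sInf {c | ∃ F : Finset (MvPolynomial (Fin N) K), F.card = c ∧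
    symbolicPower K G t = edgeIdeal K G ^ t + Ideal.span (F : Set (MvPolynomial (Fin N) K))}

/-- The graph consisting of the odd cycle on vertices `0, …, 2n` (that is,
`x_1, …, x_{2n+1}`) together with one extra vertex `2n+1` (that is, `x_{2n+2}`)
joined to vertex `0` (that is, `x_1`) by an edge. -/
def appendedCycle (n : ℕ) : SimpleGraph (Fin (2 * n + 2)) :=
  SimpleGraph.fromRel (fun i j =>
    ((j : ℕ) = (i : ℕ) + 1 ∧ (j : ℕ) ≤ 2 * n) ∨
    ((i : ℕ) = 2 * n ∧ (j : ℕ) = 0) ∨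
    ((i : ℕ) = 0 ∧ (j : ℕ) = 2 * n + 1))

/-- Cancellation of casts in `Fin`. -/
lemma fin_cast_inj {N : ℕ} [NeZero N] {c c' : ℕ} (hc : c < N) (hc' : c' < N) :
    ((c : Fin N) = (c' : Fin N)) ↔ c = c' := by
  constructor
  · intro h
    have := congrArg Fin.val h
    rwa [Fin.val_cast_of_lt hc, Fin.val_cast_of_lt hc'] at this
  · rintro rfl; rfl

/-- Suppose a monomial on `C_{2n+1}` is factored as
`m = x_j^{a_j} e_j^{b_j} e_{j+1}^{b_{j+1}} ⋯ e_{j+2k}^{b_{j+2k}} x_{j+2k+1}^{a_{j+2k+1}}`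
(indices mod `2n+1`), with ancillaries `a_j, a_{j+2k+1} ≥ 1` at both ends, and with
`b_{j+2h+1} ≥ 1` for all `h ∈ {0,…,k-1}`.  Then this factorization is not optimal:
there is a factorization of the same monomial using strictly more edges. -/
theorem not_optimal_of_odd_path (n : ℕ) (hn : 1 ≤ n) (j : Fin (2 * n + 1)) (k : ℕ)
    (hk : k < n) (a b : Fin (2 * n + 1) → ℕ)
    (haj : 1 ≤ a j)
    (haj' : 1 ≤ a (j + ((2 * k + 1 : ℕ) : Fin (2 * n + 1))))
    (ha0 : ∀ i : Fin (2 * n + 1),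
      i ≠ j → i ≠ j + ((2 * k + 1 : ℕ) : Fin (2 * n + 1)) → a i = 0)
    (hb0 : ∀ i : Fin (2 * n + 1),
      (∀ c : ℕ, c ≤ 2 * k → i ≠ j + ((c : ℕ) : Fin (2 * n + 1))) → b i = 0)
    (hodd : ∀ h : ℕ, h < k → 1 ≤ b (j + ((2 * h + 1 : ℕ) : Fin (2 * n + 1)))) :
    ∃ a' b' : Fin (2 * n + 1) → ℕ,
      (∀ i, a i + b i + b (i - 1) = a' i + b' i + b' (i - 1)) ∧
      ∑ i, b i < ∑ i, b' i := by
  classical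
  set P : Fin (2 * n + 1) → Prop :=
    fun i => ∃ h, h ≤ k ∧ i = j + ((2 * h : ℕ) : Fin (2 * n + 1)) with hPdef
  set Q : Fin (2 * n + 1) → Prop :=
    fun i => ∃ h, h < k ∧ i = j + ((2 * h + 1 : ℕ) : Fin (2 * n + 1)) with hQdef
  -- characterize P and Q in terms of offsets
  have hPiff : ∀ c : ℕ, c < 2 * n + 1 →
      (P (j + (c : Fin (2 * n + 1))) ↔ (c % 2 = 0 ∧ c ≤ 2 * k)) := by
    intro c hc
    constructor
    · rintro ⟨h, hh, heq⟩
      have h2 : ((c : Fin (2 * n + 1)) : Fin (2 * n + 1)) = ((2 * h : ℕ) : Fin (2 * n + 1)) :=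
        add_left_cancel heq
      have := (fin_cast_inj hc (by omega)).mp h2
      omega
    · rintro ⟨h1, h2⟩
      exact ⟨c / 2, by omega, by rw [(by omega : 2 * (c / 2) = c)]⟩
  have hQiff : ∀ c : ℕ, c < 2 * n + 1 →
      (Q (j + (c : Fin (2 * n + 1))) ↔ (c % 2 = 1 ∧ c < 2 * k)) := by
    intro c hc
    constructor
    · rintro ⟨h, hh, heq⟩
      have h2 : ((c : Fin (2 * n + 1)) : Fin (2 * n + 1)) = ((2 * h + 1 : ℕ) : Fin (2 * n + 1)) :=
        add_left_cancel heq
      have := (fin_cast_inj hc (by omega)).mp h2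
      omega
    · rintro ⟨h1, h2⟩
      exact ⟨c / 2, by omega, by rw [(by omega : 2 * (c / 2) + 1 = c)]⟩
  have hQb : ∀ i : Fin (2 * n + 1), Q i → 1 ≤ b i := by
    rintro i ⟨h, hh, rfl⟩
    exact hodd h hh
  refine ⟨fun i => a i - (if i = j ∨ i = j + ((2 * k + 1 : ℕ) : Fin (2 * n + 1)) then 1 else 0),
    fun i => b i + (if P i then 1 else 0) - (if Q i then 1 else 0), ?_, ?_⟩
  · intro i
    simp only
    set c := (i - j).val with hcdef
    have hcN : c < 2 * n + 1 := (i - j).isLt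
    have hci : i = j + (c : Fin (2 * n + 1)) := by
      rw [hcdef, Fin.cast_val_eq_self]
      abel
    set c2 := (i - 1 - j).val with hc2def
    have hc2N : c2 < 2 * n + 1 := (i - 1 - j).isLt
    have hci2 : i - 1 = j + (c2 : Fin (2 * n + 1)) := by
      rw [hc2def, Fin.cast_val_eq_self]
      abel
    have hrel : (c2 + 1) % (2 * n + 1) = c := by
      have h1 : ((c2 + 1 : ℕ) : Fin (2 * n + 1)) = (c : Fin (2 * n + 1)) := by
        push_cast
        rw [hcdef, hc2def, Fin.cast_val_eq_self, Fin.cast_val_eq_self]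
        abel
      have := congrArg Fin.val h1
      rwa [Fin.val_natCast, Fin.val_cast_of_lt hcN] at this
    have hrel' : (c = 0 ∧ c2 = 2 * n) ∨ c = c2 + 1 := by
      rcases Nat.lt_or_ge (c2 + 1) (2 * n + 1) with h | h
      · right; rw [Nat.mod_eq_of_lt h] at hrel; omega
      · left
        rw [(by omega : c2 + 1 = 2 * n + 1)] at hrel
        rw [Nat.mod_self] at hrel
        omega
    have eP : P i ↔ (c % 2 = 0 ∧ c ≤ 2 * k) := by rw [hci]; exact hPiff c hcN
    have eQ : Q i ↔ (c % 2 = 1 ∧ c < 2 * k) := by rw [hci]; exact hQiff c hcN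
    have eP2 : P (i - 1) ↔ (c2 % 2 = 0 ∧ c2 ≤ 2 * k) := by rw [hci2]; exact hPiff c2 hc2N
    have eQ2 : Q (i - 1) ↔ (c2 % 2 = 1 ∧ c2 < 2 * k) := by rw [hci2]; exact hQiff c2 hc2N
    have eR : (i = j ∨ i = j + ((2 * k + 1 : ℕ) : Fin (2 * n + 1))) ↔ (c = 0 ∨ c = 2 * k + 1) := by
      rw [hci]
      constructor
      · rintro (h | h)
        · left
          have : (c : Fin (2 * n + 1)) = ((0 : ℕ) : Fin (2 * n + 1)) := by
            have := h.symm
            simpa using this.symm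
          exact (fin_cast_inj hcN (by omega)).mp this
        · right
          exact (fin_cast_inj hcN (by omega)).mp (add_left_cancel h)
      · rintro (h | h)
        · left; rw [h]; simp
        · right; rw [h]
    have hb1 : (c % 2 = 1 ∧ c < 2 * k) → 1 ≤ b i := fun h => hQb i (eQ.mpr h)
    have hb2 : (c2 % 2 = 1 ∧ c2 < 2 * k) → 1 ≤ b (i - 1) := fun h => hQb _ (eQ2.mpr h)
    have ha1 : c = 0 → 1 ≤ a i := by
      intro h
      have hij : i = j := by rw [hci, h]; simp
      rw [hij]; exact haj
    have ha2 : c = 2 * k + 1 → 1 ≤ a i := by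
      intro h
      have : i = j + ((2 * k + 1 : ℕ) : Fin (2 * n + 1)) := by rw [hci, h]
      rw [this]; exact haj'
    simp only [eP, eQ, eP2, eQ2, eR]
    clear eP eQ eP2 eQ2 eR hci hci2 hPiff hQiff hQb hb0 ha0 hodd hPdef hQdef hcdef hc2def hrel
    clear_value P Q c c2
    split_ifs <;> omega
  · -- sum inequality
    have hptwise : ∀ i : Fin (2 * n + 1),
        (b i + (if P i then 1 else 0) - (if Q i then 1 else 0)) + (if Q i then 1 else 0)
          = b i + (if P i then 1 else 0) := by
      intro i
      by_cases hq : Q i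
      · have := hQb i hq
        simp only [hq, if_pos]
        omega
      · simp [hq]
    have hsum : (∑ i, (b i + (if P i then 1 else 0) - (if Q i then 1 else 0)))
        + (∑ i : Fin (2 * n + 1), (if Q i then 1 else 0))
        = (∑ i, b i) + (∑ i : Fin (2 * n + 1), (if P i then 1 else 0)) := by
      rw [← Finset.sum_add_distrib, ← Finset.sum_add_distrib]
      exact Finset.sum_congr rfl fun i _ => hptwise i
    have hPcard : (∑ i : Fin (2 * n + 1), (if P i then 1 else 0)) = k + 1 := by
      rw [← Finset.card_filter]
      have himg : Finset.univ.filter P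
          = (Finset.range (k + 1)).image (fun h => j + ((2 * h : ℕ) : Fin (2 * n + 1))) := by
        ext i
        simp only [Finset.mem_filter, Finset.mem_univ, true_and, Finset.mem_image,
          Finset.mem_range, hPdef]
        constructor
        · rintro ⟨h, hh, rfl⟩; exact ⟨h, by omega, rfl⟩
        · rintro ⟨h, hh, rfl⟩; exact ⟨h, by omega, rfl⟩
      rw [himg, Finset.card_image_of_injOn, Finset.card_range]
      intro x hx y hy hxy
      simp only [Finset.coe_range, Set.mem_Iio] at hx hy
      have := add_left_cancel hxy
      have := (fin_cast_inj (by omega : 2 * x < 2 * n + 1) (by omega : 2 * y < 2 * n + 1)).mp this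
      omega
    have hQcard : (∑ i : Fin (2 * n + 1), (if Q i then 1 else 0)) = k := by
      rw [← Finset.card_filter]
      have himg : Finset.univ.filter Q
          = (Finset.range k).image (fun h => j + ((2 * h + 1 : ℕ) : Fin (2 * n + 1))) := by
        ext i
        simp only [Finset.mem_filter, Finset.mem_univ, true_and, Finset.mem_image,
          Finset.mem_range, hQdef]
        constructor
        · rintro ⟨h, hh, rfl⟩; exact ⟨h, hh, rfl⟩
        · rintro ⟨h, hh, rfl⟩; exact ⟨h, hh, rfl⟩
      rw [himg, Finset.card_image_of_injOn, Finset.card_range]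
      intro x hx y hy hxy
      simp only [Finset.coe_range, Set.mem_Iio] at hx hy
      have := add_left_cancel hxy
      have := (fin_cast_inj (by omega : 2 * x + 1 < 2 * n + 1) (by omega : 2 * y + 1 < 2 * n + 1)).mp this
      omega
    rw [hPcard, hQcard] at hsum
    simp only at hsum ⊢
    omega
end
end

section
/- Let I = I(C_{2n+1}) be the edge ideal of the odd cycle C_{2n+1} in R = k[x_1,…,x_{2n+1}]. Then for every t ≥ 1, I^t = (L(t)), the ideal generated by the set L(t). -/
open MvPolynomial

noncomputable section

lemma nat_mod2 (x m : ℕ) (h : x < 2 * m) :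
    (x % m = x ∧ x < m) ∨ (x % m = x - m ∧ m ≤ x) := by
  rcases lt_or_ge x m with h' | h'
  · exact Or.inl ⟨Nat.mod_eq_of_lt h', h'⟩
  · refine Or.inr ⟨?_, h'⟩
    rw [Nat.mod_eq_sub_mod h', Nat.mod_eq_of_lt (by omega)]

section AuxFin
variable {m : ℕ} [NeZero m]

lemma fin_val_one' (hm : 3 ≤ m) : (1 : Fin m).val = 1 := by
  rw [Fin.val_one']
  exact Nat.mod_eq_of_lt (by omega)

lemma fin_val_add_one (hm : 3 ≤ m) (i : Fin m) : ((i + 1 : Fin m) : ℕ) = ((i : ℕ) + 1) % m := by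
  rw [Fin.val_add, fin_val_one' hm]

lemma fin_add_one_ne (hm : 3 ≤ m) (i : Fin m) : i + 1 ≠ i := by
  intro h
  have hv := congrArg Fin.val h
  rw [fin_val_add_one hm] at hv
  have hi := i.isLt
  rcases nat_mod2 (i.val + 1) m (by omega) with ⟨h1, _⟩ | ⟨h1, _⟩ <;> omega

lemma fin_add_add_ne (hm : 3 ≤ m) (i : Fin m) : i + 1 + 1 ≠ i := by
  intro h
  have hv := congrArg Fin.val h
  rw [fin_val_add_one hm, fin_val_add_one hm] at hv
  have hi := i.isLt
  rcases nat_mod2 (i.val + 1) m (by omega) with ⟨h1, h1'⟩ | ⟨h1, h1'⟩ <;> rw [h1] at hv <;>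
    [rcases nat_mod2 (i.val + 1 + 1) m (by omega) with ⟨h2, _⟩ | ⟨h2, _⟩;
     rcases nat_mod2 (i.val + 1 - m + 1) m (by omega) with ⟨h2, _⟩ | ⟨h2, _⟩] <;> omega

lemma fin_sub_one_ne (hm : 3 ≤ m) (i : Fin m) : i - 1 ≠ i := by
  intro h
  have : i = i + 1 := by
    conv_lhs => rw [← sub_add_cancel i 1, h]
  exact fin_add_one_ne hm i this.symm

lemma fin_sub_one_ne_add (hm : 3 ≤ m) (i : Fin m) : i - 1 ≠ i + 1 := by
  intro h
  have : i = i + 1 + 1 := by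
    conv_lhs => rw [← sub_add_cancel i 1, h]
  exact fin_add_add_ne hm i this.symm

lemma cycle_adj (hm : 3 ≤ m) {i j : Fin m} :
    (cycleGraph m).Adj i j ↔ i ≠ j ∧ (j = i + 1 ∨ i = j + 1) := by
  have hv : ∀ u v : Fin m, ((v : ℕ) = ((u : ℕ) + 1) % m) ↔ v = u + 1 := by
    intro u v
    rw [Fin.ext_iff, fin_val_add_one hm]
  simp only [cycleGraph, SimpleGraph.fromRel_adj, hv]

lemma adj_succ (hm : 3 ≤ m) (i : Fin m) : (cycleGraph m).Adj i (i + 1) := by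
  rw [cycle_adj hm]
  exact ⟨(fin_add_one_ne hm i).symm, Or.inl rfl⟩

end AuxFin

section Covers
variable {m : ℕ} [NeZero m]

lemma erase_cover (hm : 3 ≤ m) {S : Finset (Fin m)} (hS : IsVertexCover (cycleGraph m) S)
    {i : Fin m} (h1 : i - 1 ∈ S) (h2 : i + 1 ∈ S) :
    IsVertexCover (cycleGraph m) (S.erase i) := by
  intro u v huv
  have key : ∀ w, (cycleGraph m).Adj i w → w ∈ S.erase i := by
    intro w hw
    rw [cycle_adj hm] at hw
    obtain ⟨hne, h | h⟩ := hw
    · subst h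
      exact Finset.mem_erase.2 ⟨fin_add_one_ne hm i, h2⟩
    · have hw' : w = i - 1 := eq_sub_iff_add_eq.2 h.symm
      subst hw'
      exact Finset.mem_erase.2 ⟨fin_sub_one_ne hm i, h1⟩
  rcases hS huv with hu | hv
  · by_cases hui : u = i
    · subst hui; exact Or.inr (key v huv)
    · exact Or.inl (Finset.mem_erase.2 ⟨hui, hu⟩)
  · by_cases hvi : v = i
    · subst hvi; exact Or.inl (key u huv.symm)
    · exact Or.inr (Finset.mem_erase.2 ⟨hvi, hv⟩)

lemma insert_cover_left (hm : 3 ≤ m) {S : Finset (Fin m)} (hS : IsVertexCover (cycleGraph m) S)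
    {i : Fin m} (hi1 : i + 1 ∈ S) :
    IsVertexCover (cycleGraph m) (insert (i - 1) (S.erase i)) := by
  intro u v huv
  have key : ∀ w, (cycleGraph m).Adj i w → w ∈ insert (i - 1) (S.erase i) := by
    intro w hw
    rw [cycle_adj hm] at hw
    obtain ⟨hne, h | h⟩ := hw
    · subst h
      exact Finset.mem_insert_of_mem (Finset.mem_erase.2 ⟨fin_add_one_ne hm i, hi1⟩)
    · have hw' : w = i - 1 := eq_sub_iff_add_eq.2 h.symm
      subst hw'
      exact Finset.mem_insert_self _ _
  rcases hS huv with hu | hv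
  · by_cases hui : u = i
    · subst hui; exact Or.inr (key v huv)
    · exact Or.inl (Finset.mem_insert_of_mem (Finset.mem_erase.2 ⟨hui, hu⟩))
  · by_cases hvi : v = i
    · subst hvi; exact Or.inl (key u huv.symm)
    · exact Or.inr (Finset.mem_insert_of_mem (Finset.mem_erase.2 ⟨hvi, hv⟩))

lemma insert_cover_right (hm : 3 ≤ m) {S : Finset (Fin m)} (hS : IsVertexCover (cycleGraph m) S)
    {i : Fin m} (hi : i ∈ S) :
    IsVertexCover (cycleGraph m) (insert (i + 1 + 1) (S.erase (i + 1))) := by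
  intro u v huv
  have key : ∀ w, (cycleGraph m).Adj (i + 1) w → w ∈ insert (i + 1 + 1) (S.erase (i + 1)) := by
    intro w hw
    rw [cycle_adj hm] at hw
    obtain ⟨hne, h | h⟩ := hw
    · subst h
      exact Finset.mem_insert_self _ _
    · have hw' : w = i := by
        have := congrArg (fun x => x - 1) h
        simpa [add_sub_cancel_right] using this.symm
      subst hw'
      exact Finset.mem_insert_of_mem (Finset.mem_erase.2 ⟨Ne.symm (fin_add_one_ne hm _), hi⟩)
  rcases hS huv with hu | hv
  · by_cases hui : u = i + 1
    · subst hui; exact Or.inr (key v huv)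
    · exact Or.inl (Finset.mem_insert_of_mem (Finset.mem_erase.2 ⟨hui, hu⟩))
  · by_cases hvi : v = i + 1
    · subst hvi; exact Or.inl (key u huv.symm)
    · exact Or.inr (Finset.mem_insert_of_mem (Finset.mem_erase.2 ⟨hvi, hv⟩))

lemma cover_card (hm : 3 ≤ m) {S : Finset (Fin m)} (hS : IsVertexCover (cycleGraph m) S) :
    m ≤ 2 * S.card := by
  have h1 : ∀ i : Fin m, 1 ≤ ((if i ∈ S then 1 else 0) + (if i + 1 ∈ S then 1 else 0) : ℕ) := by
    intro i
    rcases hS (adj_succ hm i) with h | h <;> simp [h]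
  have h2 : (m : ℕ) ≤ ∑ i : Fin m, ((if i ∈ S then 1 else 0) + (if i + 1 ∈ S then 1 else 0) : ℕ) := by
    calc (m : ℕ) = ∑ _i : Fin m, 1 := by simp
    _ ≤ _ := Finset.sum_le_sum (fun i _ => h1 i)
  have h3 : ∑ i : Fin m, (if i ∈ S then 1 else 0 : ℕ) = S.card := by
    rw [Finset.sum_ite_mem, Finset.univ_inter, Finset.sum_const, smul_eq_mul, mul_one]
  have h4 : ∑ i : Fin m, (if i + 1 ∈ S then 1 else 0 : ℕ) = S.card := by
    rw [← h3]
    exact Fintype.sum_equiv (Equiv.addRight 1) _ _ (fun i => rfl)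
  rw [Finset.sum_add_distrib, h3, h4] at h2
  omega

lemma exists_min_sub {N : ℕ} {G : SimpleGraph (Fin N)} :
    ∀ S : Finset (Fin N), IsVertexCover G S → ∃ T, T ⊆ S ∧ IsMinVertexCover G T := by
  intro S
  induction S using Finset.strongInductionOn with
  | _ S ih =>
    intro hS
    by_cases h : ∀ T ⊂ S, ¬ IsVertexCover G T
    · exact ⟨S, subset_rfl, hS, h⟩
    · push_neg at h
      obtain ⟨T, hT, hTc⟩ := h
      obtain ⟨U, hU, hUm⟩ := ih T hT hTc
      exact ⟨U, hU.trans hT.subset, hUm⟩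

end Covers

open Fin.NatCast in
lemma key_edge (n t : ℕ) (hn : 1 ≤ n) (ht : 1 ≤ t) (a : Fin (2 * n + 1) → ℕ)
    (hdeg : 2 * t ≤ ∑ i, a i)
    (hcov : ∀ S : Finset (Fin (2 * n + 1)), IsVertexCover (cycleGraph (2 * n + 1)) S →
      t ≤ ∑ i ∈ S, a i) :
    ∃ i : Fin (2 * n + 1), 1 ≤ a i ∧ 1 ≤ a (i + 1) ∧
      ∀ S : Finset (Fin (2 * n + 1)), IsVertexCover (cycleGraph (2 * n + 1)) S →
        i ∈ S → i + 1 ∈ S → t + 1 ≤ ∑ j ∈ S, a j := by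
  have hm : 3 ≤ 2 * n + 1 := by omega
  by_contra hcon
  push_neg at hcon
  -- tight-cover consequences
  have step : ∀ i : Fin (2 * n + 1), 1 ≤ a i → 1 ≤ a (i + 1) →
      a i ≤ a (i - 1) ∧ a (i + 1) ≤ a (i + 1 + 1) := by
    intro i h1 h2
    obtain ⟨S, hSc, hiS, hi1S, hlt⟩ := hcon i h1 h2
    have hsum : ∑ j ∈ S, a j = t := le_antisymm (by omega) (hcov S hSc)
    have hm1 : i - 1 ∉ S := by
      intro hmem
      have hc := erase_cover hm hSc hmem hi1S
      have h5 := hcov _ hc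
      have he : ∑ j ∈ S.erase i, a j + a i = ∑ j ∈ S, a j := Finset.sum_erase_add S a hiS
      omega
    have hm2 : i + 1 + 1 ∉ S := by
      intro hmem
      have hp : (i + 1) - 1 ∈ S := by
        rwa [add_sub_cancel_right]
      have hc := erase_cover hm hSc hp hmem
      have h5 := hcov _ hc
      have he : ∑ j ∈ S.erase (i + 1), a j + a (i + 1) = ∑ j ∈ S, a j :=
        Finset.sum_erase_add S a hi1S
      omega
    constructor
    · have hc := insert_cover_left hm hSc hi1S
      have hni : i - 1 ∉ S.erase i := fun h => hm1 (Finset.mem_erase.1 h).2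
      have hins : ∑ j ∈ insert (i - 1) (S.erase i), a j = a (i - 1) + ∑ j ∈ S.erase i, a j :=
        Finset.sum_insert hni
      have h5 := hcov _ hc
      rw [hins] at h5
      have he : ∑ j ∈ S.erase i, a j + a i = ∑ j ∈ S, a j := Finset.sum_erase_add S a hiS
      omega
    · have hc := insert_cover_right hm hSc hiS
      have hni : i + 1 + 1 ∉ S.erase (i + 1) := fun h => hm2 (Finset.mem_erase.1 h).2
      have hins : ∑ j ∈ insert (i + 1 + 1) (S.erase (i + 1)), a j
          = a (i + 1 + 1) + ∑ j ∈ S.erase (i + 1), a j := Finset.sum_insert hni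
      have h5 := hcov _ hc
      rw [hins] at h5
      have he : ∑ j ∈ S.erase (i + 1), a j + a (i + 1) = ∑ j ∈ S, a j :=
        Finset.sum_erase_add S a hi1S
      omega
  -- some edge inside the support
  have hedge : ∃ i : Fin (2 * n + 1), 1 ≤ a i ∧ 1 ≤ a (i + 1) := by
    by_contra hno
    push_neg at hno
    set S := Finset.univ.filter (fun i : Fin (2 * n + 1) => a i = 0) with hSdef
    have hSc : IsVertexCover (cycleGraph (2 * n + 1)) S := by
      intro u v huv
      rw [cycle_adj hm] at huv
      by_contra hnm
      push_neg at hnm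
      obtain ⟨hnu, hnv⟩ := hnm
      have hu : 1 ≤ a u := by
        by_contra h
        exact hnu (Finset.mem_filter.2 ⟨Finset.mem_univ _, by omega⟩)
      have hv : 1 ≤ a v := by
        by_contra h
        exact hnv (Finset.mem_filter.2 ⟨Finset.mem_univ _, by omega⟩)
      obtain ⟨hne, h | h⟩ := huv
      · subst h
        exact absurd hv (by have := hno u hu; omega)
      · subst h
        exact absurd hu (by have := hno v hv; omega)
    have h5 := hcov S hSc
    have hz : ∑ i ∈ S, a i = 0 :=
      Finset.sum_eq_zero (fun i hi => (Finset.mem_filter.1 hi).2)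
    omega
  obtain ⟨i₀, hQ1, hQ2⟩ := hedge
  -- propagation around the cycle
  have prop : ∀ k : ℕ, 1 ≤ a (i₀ + (k : Fin (2 * n + 1))) ∧
      1 ≤ a (i₀ + (k : Fin (2 * n + 1)) + 1) := by
    intro k
    induction k with
    | zero => simpa using ⟨hQ1, hQ2⟩
    | succ k ih =>
      have hs := step _ ih.1 ih.2
      have hc : ((k + 1 : ℕ) : Fin (2 * n + 1)) = (k : Fin (2 * n + 1)) + 1 := by
        push_cast
        ring
      rw [hc, ← add_assoc]
      exact ⟨ih.2, le_trans ih.2 hs.2⟩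
  have hall : ∀ j : Fin (2 * n + 1), 1 ≤ a j := by
    intro j
    have h := (prop ((j - i₀).val)).1
    rwa [Fin.cast_val_eq_self, add_sub_cancel] at h
  have hmono : ∀ j : Fin (2 * n + 1), a j ≤ a (j + 1) := by
    intro j
    have h := step (j - 1) (hall _) (hall _)
    rw [sub_add_cancel] at h
    exact h.2
  have hstep2 : ∀ (j : Fin (2 * n + 1)) (k : ℕ), a j ≤ a (j + (k : Fin (2 * n + 1))) := by
    intro j k
    induction k with
    | zero => simp
    | succ k ih =>
      have h := hmono (j + (k : Fin (2 * n + 1)))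
      have hc : ((k + 1 : ℕ) : Fin (2 * n + 1)) = (k : Fin (2 * n + 1)) + 1 := by
        push_cast
        ring
      rw [hc, ← add_assoc]
      exact le_trans ih h
  have hconst : ∀ j : Fin (2 * n + 1), a j = a 0 := by
    intro j
    have h1 : a 0 ≤ a j := by
      have h := hstep2 0 j.val
      rwa [Fin.cast_val_eq_self, zero_add] at h
    have h2 : a j ≤ a 0 := by
      have h := hstep2 j ((0 - j : Fin (2 * n + 1))).val
      rwa [Fin.cast_val_eq_self, add_sub_cancel] at h
    omega
  -- final contradiction
  obtain ⟨S, hSc, h0S, h1S, hlt⟩ := hcon 0 (hall 0) (hall (0 + 1))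
  have hsum : ∑ j ∈ S, a j = t := le_antisymm (by omega) (hcov S hSc)
  have hcard := cover_card hm hSc
  have hCS : ∑ j ∈ S, a j = S.card * a 0 := by
    rw [Finset.sum_congr rfl (fun j _ => hconst j), Finset.sum_const, smul_eq_mul]
  have hU : ∑ i, a i = (2 * n + 1) * a 0 := by
    rw [Finset.sum_congr rfl (fun j _ => hconst j), Finset.sum_const, smul_eq_mul,
      Finset.card_univ, Fintype.card_fin]
  have hc1 : 1 ≤ a 0 := hall 0
  have hsc : S.card * a 0 = t := by rw [← hCS, hsum]
  have hb1 : (2 * n + 2) * a 0 ≤ (2 * S.card) * a 0 :=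
    mul_le_mul_left (by omega) _
  have hb2 : (2 * S.card) * a 0 = 2 * t := by
    rw [mul_assoc, hsc]
  have hb3 : 2 * t ≤ (2 * n + 1) * a 0 := by
    rw [← hU]
    exact hdeg
  have : (2 * n + 2) * a 0 ≤ (2 * n + 1) * a 0 := by omega
  have hle : 2 * n + 2 ≤ 2 * n + 1 := Nat.le_of_mul_le_mul_right this (by omega)
  omega

lemma sum_single_apply {N : ℕ} (i : Fin N) (s : Finset (Fin N)) :
    ∑ j ∈ s, (Finsupp.single i (1 : ℕ)) j = if i ∈ s then 1 else 0 := by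
  simp only [Finsupp.single_apply]
  exact Finset.sum_ite_eq s i (fun _ => 1)

lemma mem_pow (K : Type*) [Field K] (n : ℕ) (hn : 1 ≤ n) :
    ∀ t : ℕ, ∀ a : Fin (2 * n + 1) →₀ ℕ,
      2 * t ≤ ∑ i, a i →
      (∀ S : Finset (Fin (2 * n + 1)), IsVertexCover (cycleGraph (2 * n + 1)) S →
        t ≤ ∑ i ∈ S, a i) →
      monomial a (1 : K) ∈ edgeIdeal K (cycleGraph (2 * n + 1)) ^ t := by
  have hm : 3 ≤ 2 * n + 1 := by omega
  intro t
  induction t with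
  | zero =>
    intro a _ _
    rw [pow_zero, Ideal.one_eq_top]
    exact Submodule.mem_top
  | succ t ih =>
    intro a hdeg hcov
    obtain ⟨i, h1, h2, hkey⟩ := key_edge n (t + 1) hn (by omega) a hdeg hcov
    set e : Fin (2 * n + 1) →₀ ℕ := Finsupp.single i 1 + Finsupp.single (i + 1) 1 with he
    have hne : i ≠ i + 1 := (fin_add_one_ne hm i).symm
    have heapp : ∀ j, e j = (if i = j then 1 else 0) + (if i + 1 = j then 1 else 0) := by
      intro j
      rw [he, Finsupp.add_apply, Finsupp.single_apply, Finsupp.single_apply]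
    have hea : ∀ j, e j ≤ a j := by
      intro j
      rw [heapp]
      by_cases hj1 : i = j
      · subst hj1
        rw [if_pos rfl, if_neg (fin_add_one_ne hm _)]
        omega
      · by_cases hj2 : i + 1 = j
        · subst hj2
          rw [if_neg hj1, if_pos rfl]
          omega
        · rw [if_neg hj1, if_neg hj2]
          omega
    have hsplit : a = e + (a - e) := by
      ext j
      have := hea j
      simp only [Finsupp.coe_add, Pi.add_apply, Finsupp.coe_tsub, Pi.sub_apply]
      omega
    -- sums of e
    have heS : ∀ s : Finset (Fin (2 * n + 1)),
        ∑ j ∈ s, e j = (if i ∈ s then 1 else 0) + (if i + 1 ∈ s then 1 else 0) := by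
      intro s
      simp only [heapp]
      rw [Finset.sum_add_distrib]
      rw [Finset.sum_ite_eq s i (fun _ => 1), Finset.sum_ite_eq s (i + 1) (fun _ => 1)]
    have hsplitsum : ∀ s : Finset (Fin (2 * n + 1)),
        ∑ j ∈ s, a j = ∑ j ∈ s, e j + ∑ j ∈ s, (a - e) j := by
      intro s
      conv_lhs => rw [hsplit]
      rw [← Finset.sum_add_distrib]
      exact Finset.sum_congr rfl (fun j _ => by
        simp [Finsupp.coe_add, Pi.add_apply])
    -- IH hypotheses for a - e
    have hdeg' : 2 * t ≤ ∑ j, (a - e) j := by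
      have h := hsplitsum Finset.univ
      have h2' := heS Finset.univ
      simp only [Finset.mem_univ, if_true] at h2'
      omega
    have hcov' : ∀ S : Finset (Fin (2 * n + 1)), IsVertexCover (cycleGraph (2 * n + 1)) S →
        t ≤ ∑ j ∈ S, (a - e) j := by
      intro S hSc
      have h := hsplitsum S
      have h2' := heS S
      by_cases hiS : i ∈ S <;> by_cases hi1S : i + 1 ∈ S
      · have := hkey S hSc hiS hi1S
        simp only [hiS, hi1S, if_true] at h2'
        omega
      · have := hcov S hSc
        simp only [hiS, hi1S, if_true, if_false] at h2'
        omega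
      · have := hcov S hSc
        simp only [hiS, hi1S, if_true, if_false] at h2'
        omega
      · have := hcov S hSc
        simp only [hiS, hi1S, if_false] at h2'
        omega
    have hq := ih (a - e) hdeg' hcov'
    have hgen : (X i * X (i + 1) : MvPolynomial (Fin (2 * n + 1)) K)
        ∈ edgeIdeal K (cycleGraph (2 * n + 1)) :=
      Ideal.subset_span ⟨i, i + 1, adj_succ hm i, rfl⟩
    have hX : (X i * X (i + 1) : MvPolynomial (Fin (2 * n + 1)) K) = monomial e 1 := by
      rw [he, ← pow_one (X i : MvPolynomial (Fin (2 * n + 1)) K),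
        ← pow_one (X (i + 1) : MvPolynomial (Fin (2 * n + 1)) K),
        X_pow_eq_monomial, X_pow_eq_monomial, monomial_mul, mul_one]
    have hadd : (a - e) + e = a := by
      ext j
      have := hea j
      simp only [Finsupp.coe_add, Pi.add_apply, Finsupp.coe_tsub, Pi.sub_apply]
      omega
    have hmon : monomial a (1 : K) = monomial (a - e) 1 * (X i * X (i + 1)) := by
      rw [hX, monomial_mul, mul_one, hadd]
    rw [hmon, pow_succ]
    exact Ideal.mul_mem_mul hq hgen

lemma pow_le_span (K : Type*) [Field K] (n : ℕ) (hn : 1 ≤ n) :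
    ∀ t : ℕ, edgeIdeal K (cycleGraph (2 * n + 1)) ^ t
      ≤ Ideal.span (Lset K (cycleGraph (2 * n + 1)) t) := by
  have hm : 3 ≤ 2 * n + 1 := by omega
  intro t
  induction t with
  | zero =>
    rw [pow_zero]
    have h1 : (1 : MvPolynomial (Fin (2 * n + 1)) K) ∈ Lset K (cycleGraph (2 * n + 1)) 0 := by
      refine ⟨0, ?_, by simp, fun S _ => Nat.zero_le _⟩
      simp
    have h2 : Ideal.span (Lset K (cycleGraph (2 * n + 1)) 0) = ⊤ :=
      Ideal.eq_top_iff_one _ |>.2 (Ideal.subset_span h1)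
    rw [h2]
    exact le_top
  | succ t ih =>
    rw [pow_succ]
    refine le_trans (Ideal.mul_mono ih le_rfl) ?_
    have hEI : edgeIdeal K (cycleGraph (2 * n + 1))
        = Ideal.span {p : MvPolynomial (Fin (2 * n + 1)) K |
            ∃ i j, (cycleGraph (2 * n + 1)).Adj i j ∧ p = X i * X j} := rfl
    rw [hEI, Ideal.span_mul_span, Ideal.span_le]
    rintro x hx
    simp only [Set.mem_mul] at hx
    obtain ⟨p, hp, g, hg, rfl⟩ := hx
    obtain ⟨a, rfl, hdeg, hmin⟩ := hp
    obtain ⟨i, j, hadj, rfl⟩ := hg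
    have hX : (X i * X j : MvPolynomial (Fin (2 * n + 1)) K)
        = monomial (Finsupp.single i 1 + Finsupp.single j 1) 1 := by
      rw [← pow_one (X i : MvPolynomial (Fin (2 * n + 1)) K),
        ← pow_one (X j : MvPolynomial (Fin (2 * n + 1)) K),
        X_pow_eq_monomial, X_pow_eq_monomial, monomial_mul, mul_one]
    set b : Fin (2 * n + 1) →₀ ℕ := a + (Finsupp.single i 1 + Finsupp.single j 1) with hb
    have hmul : (monomial a 1 : MvPolynomial (Fin (2 * n + 1)) K) * (X i * X j)
        = monomial b 1 := by
      rw [hX, monomial_mul, mul_one, hb]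
    rw [hmul]
    apply Ideal.subset_span
    refine ⟨b, rfl, ?_, ?_⟩
    · have hbv : ∀ s : Finset (Fin (2 * n + 1)), ∑ k ∈ s, b k
          = ∑ k ∈ s, a k + ((if i ∈ s then 1 else 0) + (if j ∈ s then 1 else 0)) := by
        intro s
        rw [hb]
        simp only [Finsupp.coe_add, Pi.add_apply]
        rw [Finset.sum_add_distrib, Finset.sum_add_distrib,
          sum_single_apply, sum_single_apply]
      have := hbv Finset.univ
      simp only [Finset.mem_univ, if_true] at this
      omega
    · intro S hS
      have hbv : ∑ k ∈ S, b k
          = ∑ k ∈ S, a k + ((if i ∈ S then 1 else 0) + (if j ∈ S then 1 else 0)) := by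
        rw [hb]
        simp only [Finsupp.coe_add, Pi.add_apply]
        rw [Finset.sum_add_distrib, Finset.sum_add_distrib,
          sum_single_apply, sum_single_apply]
      have hw := hmin S hS
      rcases hS.1 hadj with h | h <;> rw [hbv] <;> simp [h] <;> omega

/-- For the edge ideal of an odd cycle, `I^t = (L(t))`. -/
theorem edgeIdeal_pow_eq_span_Lset (K : Type*) [Field K] (n t : ℕ)
    (hn : 1 ≤ n) (ht : 1 ≤ t) :
    edgeIdeal K (cycleGraph (2 * n + 1)) ^ t
      = Ideal.span (Lset K (cycleGraph (2 * n + 1)) t) := by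
  apply le_antisymm
  · exact pow_le_span K n hn t
  · rw [Ideal.span_le]
    rintro p ⟨a, rfl, hdeg, hminw⟩
    have hcov : ∀ S : Finset (Fin (2 * n + 1)), IsVertexCover (cycleGraph (2 * n + 1)) S →
        t ≤ ∑ i ∈ S, a i := by
      intro S hS
      obtain ⟨T, hTS, hTmin⟩ := exists_min_sub S hS
      exact le_trans (hminw T hTmin) (Finset.sum_le_sum_of_subset hTS)
    exact mem_pow K n hn t a hdeg hcov
end
end

section
/- Let C_{2n+1} be the odd cycle on vertices x_1,…,x_{2n+1} and t ≥ 1. If a monomial x^a = x_1^{a_1}⋯x_{2n+1}^{a_{2n+1}} has a_i = 0 for some i, then x^a ∉ (D(t)), the ideal generated by the set D(t). -/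
open MvPolynomial

noncomputable section

section AuxOddCycle

/-- Adjacency in the cycle graph, in terms of `Fin` arithmetic. -/
lemma cycle_adj_iff {m : ℕ} [NeZero m] (hm : 1 < m) (u v : Fin m) :
    (cycleGraph m).Adj u v ↔ u ≠ v ∧ (v = u + 1 ∨ u = v + 1) := by
  have h1 : ((1 : Fin m) : ℕ) = 1 := by
    rw [Fin.val_one']; exact Nat.mod_eq_of_lt hm
  have key : ∀ a b : Fin m, ((b : ℕ) = ((a : ℕ) + 1) % m ↔ b = a + 1) := by
    intro a b
    rw [Fin.ext_iff, Fin.val_add, h1]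
  show (SimpleGraph.fromRel _).Adj u v ↔ _
  rw [SimpleGraph.fromRel_adj]
  constructor
  · rintro ⟨hne, h | h⟩
    exacts [⟨hne, Or.inl ((key u v).1 h)⟩, ⟨hne, Or.inr ((key v u).1 h)⟩]
  · rintro ⟨hne, h | h⟩
    exacts [⟨hne, Or.inl ((key u v).2 h)⟩, ⟨hne, Or.inr ((key v u).2 h)⟩]

lemma val_add_one' {n : ℕ} (hn : 1 ≤ n) (c : Fin (2 * n + 1)) :
    ((c + 1 : Fin (2 * n + 1)) : ℕ) = ((c : ℕ) + 1) % (2 * n + 1) := by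
  have h1 : ((1 : Fin (2 * n + 1)) : ℕ) = 1 := by
    rw [Fin.val_one' (2 * n + 1)]
    exact Nat.mod_eq_of_lt (by omega)
  rw [Fin.val_add, h1]

lemma val_add_one_of_lt' {n : ℕ} (hn : 1 ≤ n) {c : Fin (2 * n + 1)} (hc : (c : ℕ) < 2 * n) :
    ((c + 1 : Fin (2 * n + 1)) : ℕ) = (c : ℕ) + 1 := by
  rw [val_add_one' hn]; exact Nat.mod_eq_of_lt (by omega)

lemma add_one_eq_zero' {n : ℕ} (hn : 1 ≤ n) {c : Fin (2 * n + 1)} (hc : (c : ℕ) = 2 * n) :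
    c + 1 = 0 := by
  rw [Fin.ext_iff, val_add_one' hn, hc, Fin.val_zero]
  simp [Nat.mod_self]

lemma val_of_add_one_eq_zero' {n : ℕ} (hn : 1 ≤ n) {c : Fin (2 * n + 1)} (hc : c + 1 = 0) :
    (c : ℕ) = 2 * n := by
  have h := val_add_one' hn c
  rw [hc, Fin.val_zero] at h
  have hlt := c.isLt
  rcases Nat.lt_or_ge ((c : ℕ) + 1) (2 * n + 1) with h2 | h2
  · rw [Nat.mod_eq_of_lt h2] at h; omega
  · omega

lemma val_sub_one' {n : ℕ} (hn : 1 ≤ n) {c : Fin (2 * n + 1)} (hc : (c : ℕ) ≠ 0) :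
    ((c - 1 : Fin (2 * n + 1)) : ℕ) = (c : ℕ) - 1 := by
  have hd : (c - 1) + 1 = c := by abel
  have h := val_add_one' hn (c - 1)
  rw [hd] at h
  rcases Nat.lt_or_ge (((c - 1 : Fin (2 * n + 1)) : ℕ) + 1) (2 * n + 1) with h2 | h2
  · rw [Nat.mod_eq_of_lt h2] at h; omega
  · have hlt := (c - 1 : Fin (2 * n + 1)).isLt
    have h3 : ((c - 1 : Fin (2 * n + 1)) : ℕ) = 2 * n := by omega
    rw [h3] at h
    simp [Nat.mod_self] at h
    exact absurd (by simp [h]) hc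

lemma fin_one_ne_zero' {n : ℕ} (hn : 1 ≤ n) : (1 : Fin (2 * n + 1)) ≠ 0 := by
  intro h
  have := congrArg Fin.val h
  rw [Fin.val_one', Fin.val_zero, Nat.mod_eq_of_lt (show (1:ℕ) < 2 * n + 1 by omega)] at this
  exact one_ne_zero this

lemma adj_add_one' {n : ℕ} (hn : 1 ≤ n) (v : Fin (2 * n + 1)) :
    (cycleGraph (2 * n + 1)).Adj v (v + 1) := by
  rw [cycle_adj_iff (by omega)]
  refine ⟨?_, Or.inl rfl⟩
  intro h
  exact fin_one_ne_zero' hn (left_eq_add.mp h)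

lemma adj_sub_one' {n : ℕ} (hn : 1 ≤ n) (v : Fin (2 * n + 1)) :
    (cycleGraph (2 * n + 1)).Adj v (v - 1) := by
  rw [cycle_adj_iff (by omega)]
  constructor
  · intro h
    have h2 : v - (v - 1) = 0 := by rw [← h]; exact sub_self v
    have h3 : v - (v - 1) = 1 := by abel
    rw [h3] at h2
    exact fin_one_ne_zero' hn h2
  · right; abel

/-- The cover `{i} ∪ {i + odd offsets}`. -/
def Scov (n : ℕ) (i : Fin (2 * n + 1)) : Finset (Fin (2 * n + 1)) :=
  Finset.univ.filter (fun v => v = i ∨ Odd ((v - i : Fin (2 * n + 1)) : ℕ))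

/-- The cover `{i + even offsets}`. -/
def Tcov (n : ℕ) (i : Fin (2 * n + 1)) : Finset (Fin (2 * n + 1)) :=
  Finset.univ.filter (fun v => Even ((v - i : Fin (2 * n + 1)) : ℕ))

lemma mem_Scov {n : ℕ} {i v : Fin (2 * n + 1)} :
    v ∈ Scov n i ↔ (v = i ∨ Odd ((v - i : Fin (2 * n + 1)) : ℕ)) := by
  simp [Scov]

lemma mem_Tcov {n : ℕ} {i v : Fin (2 * n + 1)} :
    v ∈ Tcov n i ↔ Even ((v - i : Fin (2 * n + 1)) : ℕ) := by
  simp [Tcov]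

lemma fin_eq_iff_sub_val {n : ℕ} (u i : Fin (2 * n + 1)) :
    u = i ↔ ((u - i : Fin (2 * n + 1)) : ℕ) = 0 := by
  rw [← sub_eq_zero (a := u), Fin.ext_iff, Fin.val_zero]

lemma min_of_private {N : ℕ} {G : SimpleGraph (Fin N)} {S : Finset (Fin N)}
    (hc : IsVertexCover G S) (h : ∀ v ∈ S, ∃ u, G.Adj v u ∧ u ∉ S) :
    IsMinVertexCover G S := by
  refine ⟨hc, ?_⟩
  intro T hT hTc
  obtain ⟨v, hvS, hvT⟩ := Finset.exists_of_ssubset hT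
  obtain ⟨u, hadj, huS⟩ := h v hvS
  rcases hTc hadj with h1 | h2
  · exact hvT h1
  · exact huS (hT.subset h2)

lemma scov_min (n : ℕ) (hn : 1 ≤ n) (i : Fin (2 * n + 1)) :
    IsMinVertexCover (cycleGraph (2 * n + 1)) (Scov n i) := by
  have hm : 1 < 2 * n + 1 := by omega
  have main : ∀ u : Fin (2 * n + 1), u ∈ Scov n i ∨ u + 1 ∈ Scov n i := by
    intro u
    set c : Fin (2 * n + 1) := u - i with hc
    have hc1 : (u + 1) - i = c + 1 := by rw [hc]; abel
    have hlt : (c : ℕ) < 2 * n + 1 := c.isLt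
    by_cases h0 : (c : ℕ) = 0
    · left; rw [mem_Scov]; left; rw [fin_eq_iff_sub_val, ← hc]; exact h0
    rcases Nat.even_or_odd (c : ℕ) with he | ho
    · right
      rw [mem_Scov, hc1]
      by_cases h2n : (c : ℕ) = 2 * n
      · left
        rw [← sub_eq_zero (a := u + 1), hc1]
        exact add_one_eq_zero' hn h2n
      · right
        rw [val_add_one_of_lt' hn (by omega)]
        exact he.add_one
    · left; rw [mem_Scov]; right; exact ho
  have hcov : IsVertexCover (cycleGraph (2 * n + 1)) (Scov n i) := by
    intro u v hadj
    rw [cycle_adj_iff hm] at hadj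
    rcases hadj.2 with h | h
    · rw [h]; exact main u
    · rw [h]; exact (main v).symm
  refine min_of_private hcov ?_
  intro v hv
  rw [mem_Scov] at hv
  rcases hv with h1 | ho
  · -- v = i : take the edge to v - 1
    refine ⟨v - 1, adj_sub_one' hn v, ?_⟩
    rw [mem_Scov]
    push_neg
    have hsub : (v - 1) - i = -1 := by rw [h1]; abel
    have hval : (((v - 1) - i : Fin (2 * n + 1)) : ℕ) = 2 * n := by
      apply val_of_add_one_eq_zero' hn
      rw [hsub]; abel
    constructor
    · intro h
      rw [fin_eq_iff_sub_val] at h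
      omega
    · rw [hval, Nat.odd_iff]; omega
  · -- odd offset: take the edge to v + 1
    refine ⟨v + 1, adj_add_one' hn v, ?_⟩
    rw [mem_Scov]
    push_neg
    have hc1 : (v + 1) - i = (v - i) + 1 := by abel
    have hlt : ((v - i : Fin (2 * n + 1)) : ℕ) < 2 * n := by
      have := (v - i : Fin (2 * n + 1)).isLt
      rcases ho with ⟨k, hk⟩
      omega
    have hval : (((v + 1) - i : Fin (2 * n + 1)) : ℕ) = ((v - i : Fin (2 * n + 1)) : ℕ) + 1 := by
      rw [hc1]; exact val_add_one_of_lt' hn hlt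
    constructor
    · intro h
      rw [fin_eq_iff_sub_val] at h
      omega
    · rw [hval, Nat.odd_iff]
      rcases ho with ⟨k, hk⟩
      omega

lemma tcov_min (n : ℕ) (hn : 1 ≤ n) (i : Fin (2 * n + 1)) :
    IsMinVertexCover (cycleGraph (2 * n + 1)) (Tcov n i) := by
  have hm : 1 < 2 * n + 1 := by omega
  have main : ∀ u : Fin (2 * n + 1), u ∈ Tcov n i ∨ u + 1 ∈ Tcov n i := by
    intro u
    set c : Fin (2 * n + 1) := u - i with hc
    have hc1 : (u + 1) - i = c + 1 := by rw [hc]; abel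
    have hlt : (c : ℕ) < 2 * n + 1 := c.isLt
    rcases Nat.even_or_odd (c : ℕ) with he | ho
    · left; rw [mem_Tcov, ← hc]; exact he
    · right
      rw [mem_Tcov, hc1]
      have hlt2 : (c : ℕ) < 2 * n := by
        rcases ho with ⟨k, hk⟩; omega
      rw [val_add_one_of_lt' hn hlt2]
      rcases ho with ⟨k, hk⟩
      exact ⟨k + 1, by omega⟩
  have hcov : IsVertexCover (cycleGraph (2 * n + 1)) (Tcov n i) := by
    intro u v hadj
    rw [cycle_adj_iff hm] at hadj
    rcases hadj.2 with h | h
    · rw [h]; exact main u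
    · rw [h]; exact (main v).symm
  refine min_of_private hcov ?_
  intro v hv
  rw [mem_Tcov] at hv
  by_cases h0 : ((v - i : Fin (2 * n + 1)) : ℕ) = 0
  · -- v = i : take the edge to v + 1
    refine ⟨v + 1, adj_add_one' hn v, ?_⟩
    rw [mem_Tcov]
    have hc1 : (v + 1) - i = (v - i) + 1 := by abel
    have hval : (((v + 1) - i : Fin (2 * n + 1)) : ℕ) = 1 := by
      rw [hc1, val_add_one_of_lt' hn (by omega), h0]
    rw [hval, Nat.even_iff]
    omega
  · -- even nonzero offset: take the edge to v - 1
    refine ⟨v - 1, adj_sub_one' hn v, ?_⟩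
    rw [mem_Tcov]
    have hc1 : (v - 1) - i = (v - i) - 1 := by abel
    have hval : (((v - 1) - i : Fin (2 * n + 1)) : ℕ) = ((v - i : Fin (2 * n + 1)) : ℕ) - 1 := by
      rw [hc1]; exact val_sub_one' hn h0
    rw [hval, Nat.even_iff]
    rw [Nat.even_iff] at hv
    omega

lemma scov_union_tcov (n : ℕ) (i : Fin (2 * n + 1)) :
    Scov n i ∪ Tcov n i = Finset.univ := by
  ext v
  simp only [Finset.mem_union, mem_Scov, mem_Tcov, Finset.mem_univ, iff_true]
  rcases Nat.even_or_odd ((v - i : Fin (2 * n + 1)) : ℕ) with he | ho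
  · exact Or.inr he
  · exact Or.inl (Or.inr ho)

lemma scov_inter_tcov (n : ℕ) (i : Fin (2 * n + 1)) :
    Scov n i ∩ Tcov n i = {i} := by
  ext v
  simp only [Finset.mem_inter, mem_Scov, mem_Tcov, Finset.mem_singleton]
  constructor
  · rintro ⟨rfl | ho, he⟩
    · rfl
    · exact absurd he (Nat.not_even_iff_odd.mpr ho)
  · rintro rfl
    refine ⟨Or.inl rfl, ?_⟩
    rw [sub_self]
    simp

end AuxOddCycle

/-- If a monomial `x^a` on the odd cycle has some exponent equal to `0`, then
`x^a ∉ (D(t))`. -/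
theorem monomial_not_mem_span_Dset_of_exists_zero (K : Type*) [Field K] (n t : ℕ)
    (hn : 1 ≤ n) (ht : 1 ≤ t) (a : Fin (2 * n + 1) →₀ ℕ)
    (i : Fin (2 * n + 1)) (hai : a i = 0) :
    (monomial a (1 : K)) ∉ Ideal.span (Dset K (cycleGraph (2 * n + 1)) t) := by
  intro hmem
  have hD : Dset K (cycleGraph (2 * n + 1)) t =
      (fun b => monomial b (1 : K)) '' {b : Fin (2 * n + 1) →₀ ℕ |
        (∑ j, b j) < 2 * t ∧ ∀ S : Finset (Fin (2 * n + 1)),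
          IsMinVertexCover (cycleGraph (2 * n + 1)) S → t ≤ ∑ j ∈ S, b j} := by
    ext p
    simp only [Dset, Set.mem_setOf_eq, Set.mem_image]
    constructor
    · rintro ⟨b, rfl, h1, h2⟩; exact ⟨b, ⟨h1, h2⟩, rfl⟩
    · rintro ⟨b, ⟨h1, h2⟩, rfl⟩; exact ⟨b, rfl, h1, h2⟩
  rw [hD, mem_ideal_span_monomial_image] at hmem
  obtain ⟨b, ⟨hdeg, hw⟩, hba⟩ := hmem a (by simp [support_monomial])
  have hbi : b i = 0 := by
    have := hba i
    omega
  have hS := hw (Scov n i) (scov_min n hn i)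
  have hT := hw (Tcov n i) (tcov_min n hn i)
  have hsum := Finset.sum_union_inter (s₁ := Scov n i) (s₂ := Tcov n i) (f := fun j => b j)
  rw [scov_union_tcov, scov_inter_tcov, Finset.sum_singleton] at hsum
  omega
end
end

section
/- Let I = I(C_{2n+1}) be the edge ideal of the odd cycle C_{2n+1}. Then I^(t) = I^t for all t with 1 ≤ t ≤ n. -/
open MvPolynomial

noncomputable section

namespace Aux


/-- Every vertex cover contains a minimal vertex cover. -/
theorem exists_min_cover {N : ℕ} (G : SimpleGraph (Fin N)) :
    ∀ S : Finset (Fin N), IsVertexCover G S → ∃ T ⊆ S, IsMinVertexCover G T := by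
  intro S
  induction S using Finset.strongInduction with
  | _ S ih =>
    intro hS
    by_cases h : ∀ T ⊂ S, ¬ IsVertexCover G T
    · exact ⟨S, subset_rfl, hS, h⟩
    · push_neg at h
      obtain ⟨T, hTS, hT⟩ := h
      obtain ⟨T', hT'T, hT'⟩ := ih T hTS hT
      exact ⟨T', hT'T.trans hTS.subset, hT'⟩

variable {K : Type*} [Field K] {N : ℕ}

/-- Image of a set of exponent vectors under `monomial · 1`. -/
def MImg (K : Type*) [Field K] {N : ℕ} (A : Set (Fin N →₀ ℕ)) :
    Set (MvPolynomial (Fin N) K) :=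
  (fun s => monomial s (1 : K)) '' A

def sumSet {α : Type*} (g : α → (Fin N →₀ ℕ)) (t : ℕ) : Set (Fin N →₀ ℕ) :=
  {c | ∃ l : Multiset α, Multiset.card l = t ∧ (l.map g).sum = c}

lemma sumSet_zero {α : Type*} (g : α → (Fin N →₀ ℕ)) : sumSet g 0 = {0} := by
  ext c
  simp only [sumSet, Set.mem_setOf_eq, Multiset.card_eq_zero, Set.mem_singleton_iff]
  constructor
  · rintro ⟨l, rfl, rfl⟩; simp
  · rintro rfl; exact ⟨0, rfl, by simp⟩

lemma sumSet_one {α : Type*} (g : α → (Fin N →₀ ℕ)) : sumSet g 1 = Set.range g := by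
  ext c
  simp only [sumSet, Set.mem_setOf_eq, Multiset.card_eq_one, Set.mem_range]
  constructor
  · rintro ⟨l, ⟨x, rfl⟩, rfl⟩; exact ⟨x, by simp⟩
  · rintro ⟨x, rfl⟩; exact ⟨{x}, ⟨x, rfl⟩, by simp⟩

lemma span_MImg_mul (A B : Set (Fin N →₀ ℕ)) :
    Ideal.span (MImg K A) * Ideal.span (MImg K B)
      = Ideal.span (MImg K {c | ∃ a ∈ A, ∃ b ∈ B, a + b = c}) := by
  rw [Ideal.span_mul_span']
  congr 1
  ext p
  simp only [MImg, Set.mem_mul, Set.mem_image, Set.mem_setOf_eq]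
  constructor
  · rintro ⟨x, ⟨a, ha, rfl⟩, y, ⟨b, hb, rfl⟩, rfl⟩
    exact ⟨a + b, ⟨a, ha, b, hb, rfl⟩, by rw [monomial_mul, one_mul]⟩
  · rintro ⟨c, ⟨a, ha, b, hb, rfl⟩, rfl⟩
    exact ⟨monomial a 1, ⟨a, ha, rfl⟩, monomial b 1, ⟨b, hb, rfl⟩, by rw [monomial_mul, one_mul]⟩

lemma span_MImg_sumSet {α : Type*} (g : α → (Fin N →₀ ℕ)) (t : ℕ) :
    Ideal.span (MImg K (sumSet g t)) = Ideal.span (MImg K (Set.range g)) ^ t := by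
  induction t with
  | zero =>
    rw [pow_zero, sumSet_zero]
    have h1 : MImg K ({0} : Set (Fin N →₀ ℕ)) = {1} := by
      simp [MImg, monomial_zero']
    rw [h1, Ideal.span_singleton_one, Ideal.one_eq_top]
  | succ t ihh =>
    have hset : sumSet g (t+1) = {c | ∃ a ∈ sumSet g t, ∃ b ∈ sumSet g 1, a + b = c} := by
      classical
      ext c
      simp only [Set.mem_setOf_eq, sumSet]
      constructor
      · rintro ⟨l, hl, rfl⟩
        have hpos : 0 < Multiset.card l := by omega
        obtain ⟨x, hx⟩ := Multiset.card_pos_iff_exists_mem.mp hpos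
        obtain ⟨l', rfl⟩ : ∃ l', l = x ::ₘ l' := ⟨l.erase x, (Multiset.cons_erase hx).symm⟩
        refine ⟨(l'.map g).sum, ⟨l', ?_, rfl⟩, g x, ⟨{x}, rfl, by simp⟩, ?_⟩
        · have := hl; rw [Multiset.card_cons] at this; omega
        · rw [Multiset.map_cons, Multiset.sum_cons]; exact add_comm _ _
      · rintro ⟨a, ⟨l, hl, rfl⟩, b, ⟨l1, hl1, rfl⟩, rfl⟩
        exact ⟨l + l1, by simp [hl, hl1], by simp⟩
    rw [pow_succ, ← ihh, ← sumSet_one g, span_MImg_mul, hset]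

lemma varIdeal_pow (S : Finset (Fin N)) (t : ℕ) :
    varIdeal K N S ^ t
      = Ideal.span (MImg K (sumSet (fun x : {y // y ∈ S} => Finsupp.single x.1 1) t)) := by
  rw [span_MImg_sumSet]
  congr 2
  unfold varIdeal
  congr 1
  ext p
  simp only [Set.mem_image, MImg, Set.mem_range, Finset.coe_sort_coe]
  constructor
  · rintro ⟨i, hi, rfl⟩
    exact ⟨Finsupp.single i 1, ⟨⟨i, hi⟩, rfl⟩, rfl⟩
  · rintro ⟨c, ⟨⟨i, hi⟩, rfl⟩, rfl⟩
    exact ⟨i, hi, rfl⟩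




variable {n : ℕ}

lemma val_add_one (hn : 1 ≤ n) (i : Fin (2*n+1)) :
    ((i + 1 : Fin (2*n+1)) : ℕ) = ((i : ℕ) + 1) % (2*n+1) := by
  rw [Fin.val_add, Fin.val_one']
  congr 1
  have : 1 % (2*n+1) = 1 := Nat.mod_eq_of_lt (by omega)
  omega

lemma add_one_ne (hn : 1 ≤ n) (i : Fin (2*n+1)) : i + 1 ≠ i := by
  intro h
  rw [Fin.ext_iff, val_add_one hn] at h
  have hi := i.isLt
  rcases Nat.lt_or_ge ((i : ℕ) + 1) (2*n+1) with h1 | h1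
  · rw [Nat.mod_eq_of_lt h1] at h; omega
  · have h2 : (i : ℕ) + 1 = 2*n+1 := by omega
    rw [h2, Nat.mod_self] at h; omega

lemma adj_iff (hn : 1 ≤ n) (i j : Fin (2*n+1)) :
    (cycleGraph (2*n+1)).Adj i j ↔ i ≠ j ∧ (j = i + 1 ∨ i = j + 1) := by
  show (SimpleGraph.fromRel _).Adj i j ↔ _
  rw [SimpleGraph.fromRel_adj]
  have h1 : ∀ a b : Fin (2*n+1), ((b : ℕ) = ((a : ℕ) + 1) % (2*n+1)) ↔ b = a + 1 := by
    intro a b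
    rw [Fin.ext_iff, val_add_one hn]
  rw [h1, h1]

lemma adj_succ (hn : 1 ≤ n) (i : Fin (2*n+1)) :
    (cycleGraph (2*n+1)).Adj i (i + 1) :=
  (adj_iff hn i (i+1)).mpr ⟨(add_one_ne hn i).symm, Or.inl rfl⟩

lemma univ_cover : IsVertexCover (cycleGraph (2*n+1)) Finset.univ :=
  fun i _ _ => Or.inl (Finset.mem_univ i)

/-- The exponent vector of the edge `{j, j+1}`. -/
noncomputable def edgeVec {m : ℕ} [NeZero m] (j : Fin m) : Fin m →₀ ℕ :=
  Finsupp.single j 1 + Finsupp.single (j+1) 1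

lemma msum_apply {m : ℕ} (l : Multiset (Fin m →₀ ℕ)) (i : Fin m) :
    (l.sum) i = (l.map (fun c => c i)).sum := by
  induction l using Multiset.induction with
  | empty => simp
  | cons x l ih => simp [ih]

lemma sum_insert_zero {α} [DecidableEq α] (f : α → ℕ) {x : α} (T : Finset α) (h : f x = 0) :
    ∑ i ∈ insert x T, f i ≤ ∑ i ∈ T, f i := by
  by_cases hx : x ∈ T
  · rw [Finset.insert_eq_self.mpr hx]
  · rw [Finset.sum_insert hx, h, zero_add]

open Fin.NatCast in
theorem key (hn : 1 ≤ n) :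
    ∀ N t, t ≤ n → ∀ a : Fin (2*n+1) → ℕ, (∑ i, a i) ≤ N →
    (∀ S : Finset (Fin (2*n+1)), IsVertexCover (cycleGraph (2*n+1)) S → t ≤ ∑ i ∈ S, a i) →
    ∃ l : Multiset (Fin (2*n+1)), Multiset.card l = t ∧
      ∀ i : Fin (2*n+1), (((l.map edgeVec).sum : Fin (2*n+1) →₀ ℕ) i) ≤ a i := by
  intro N
  induction N with
  | zero =>
    intro t ht a hsum hcov
    have h0 : t ≤ 0 := by
      have := hcov Finset.univ univ_cover
      omega
    refine ⟨0, by simp; omega, fun i => by simp⟩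
  | succ N ih =>
    intro t ht a hsum hcov
    by_cases ht0 : t = 0
    · exact ⟨0, by simp [ht0], fun i => by simp⟩
    by_cases hall : ∀ i, 1 ≤ a i
    · -- explicit matching on vertices 0,1,...,2t-1
      refine ⟨(Multiset.range t).map (fun k => ((2*k : ℕ) : Fin (2*n+1))), by simp, ?_⟩
      intro i
      rw [msum_apply, Multiset.map_map, Multiset.map_map]
      have hrw : ((Multiset.range t).map
          (((fun c : Fin (2*n+1) →₀ ℕ => c i) ∘ edgeVec) ∘ (fun k => ((2*k : ℕ) : Fin (2*n+1))))).sum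
          = ∑ k ∈ Finset.range t, edgeVec ((2*k : ℕ) : Fin (2*n+1)) i := rfl
      rw [hrw]
      have hbound : ∑ k ∈ Finset.range t, edgeVec ((2*k : ℕ) : Fin (2*n+1)) i ≤ 1 := by
        have hstep : ∀ k ∈ Finset.range t,
            edgeVec ((2*k : ℕ) : Fin (2*n+1)) i ≤ if k = (i : ℕ)/2 then 1 else 0 := by
          intro k hk
          have hkt : k < t := Finset.mem_range.mp hk
          have h2k : ((2*k : ℕ) : Fin (2*n+1)).val = 2*k := by
            rw [Fin.val_natCast]; exact Nat.mod_eq_of_lt (by omega)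
          have h2k1 : ((((2*k : ℕ) : Fin (2*n+1)) + 1)).val = 2*k+1 := by
            rw [val_add_one hn, h2k]; exact Nat.mod_eq_of_lt (by omega)
          have e1 : (((2*k : ℕ) : Fin (2*n+1)) = i) ↔ 2*k = (i : ℕ) := by
            rw [Fin.ext_iff, h2k]
          have e2 : ((((2*k : ℕ) : Fin (2*n+1)) + 1) = i) ↔ 2*k+1 = (i : ℕ) := by
            rw [Fin.ext_iff, h2k1]
          unfold edgeVec
          rw [Finsupp.add_apply, Finsupp.single_apply, Finsupp.single_apply]
          simp only [e1, e2]
          split_ifs <;> omega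
        calc ∑ k ∈ Finset.range t, edgeVec ((2*k : ℕ) : Fin (2*n+1)) i
            ≤ ∑ k ∈ Finset.range t, (if k = (i : ℕ)/2 then 1 else 0) :=
              Finset.sum_le_sum hstep
          _ = if (i : ℕ)/2 ∈ Finset.range t then 1 else 0 := by
              rw [Finset.sum_ite_eq' (Finset.range t) ((i : ℕ)/2) (fun _ => 1)]
          _ ≤ 1 := by split_ifs <;> omega
      exact le_trans hbound (hall i)
    · -- some vertex has weight zero
      push_neg at hall
      obtain ⟨z, hz'⟩ := hall
      have hz : a z = 0 := by omega
      have hpos : ∃ p, a p ≠ 0 := by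
        by_contra h
        push_neg at h
        have := hcov Finset.univ univ_cover
        simp only [h] at this
        simp at this
        omega
      obtain ⟨p, hp⟩ := hpos
      have hex : ∃ k : ℕ, a (z + ((k : ℕ) : Fin (2*n+1))) ≠ 0 := by
        refine ⟨(p - z).val, ?_⟩
        rw [Fin.cast_val_eq_self]
        rw [add_comm, sub_add_cancel]
        exact hp
      set d := Nat.find hex with hd_def
      have hd : a (z + ((d : ℕ) : Fin (2*n+1))) ≠ 0 := Nat.find_spec hex
      have hd1 : 1 ≤ d := by
        rcases Nat.eq_zero_or_pos d with h | h
        · exfalso; rw [h] at hd; simp at hd; exact hd hz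
        · exact h
      set j : Fin (2*n+1) := z + ((d : ℕ) : Fin (2*n+1)) with hj_def
      have hjpos : a j ≠ 0 := hd
      have hjprev : a (j - 1) = 0 := by
        have h2 := Nat.find_min hex (show d - 1 < d by omega)
        push_neg at h2
        have hcast : ((d : ℕ) : Fin (2*n+1)) = (((d-1 : ℕ) : ℕ) : Fin (2*n+1)) + 1 := by
          conv_lhs => rw [show d = (d-1)+1 by omega]
          push_cast
          ring
        have hj1 : j - 1 = z + (((d-1 : ℕ) : ℕ) : Fin (2*n+1)) := by
          rw [hj_def, hcast, ← add_assoc, add_sub_cancel_right]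
        rw [hj1]
        exact h2
      by_cases hnext : a (j + 1) = 0
      · -- isolated positive vertex j: zero it out
        set a' := Function.update a j 0 with ha'
        have hle' : ∀ i, a' i ≤ a i := by
          intro i
          by_cases h : i = j
          · subst h; simp [ha']
          · simp [ha', Function.update_of_ne h]
        have hsum' : ∑ i, a' i ≤ N := by
          have hlt : ∑ i, a' i < ∑ i, a i := by
            refine Finset.sum_lt_sum (fun i _ => hle' i) ⟨j, Finset.mem_univ j, ?_⟩
            simp [ha']
            omega
          omega
        have hcov' : ∀ S, IsVertexCover (cycleGraph (2*n+1)) S → t ≤ ∑ i ∈ S, a' i := by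
          intro S hS
          set S' := insert (j-1) (insert (j+1) (S.erase j)) with hS'_def
          have hS'cov : IsVertexCover (cycleGraph (2*n+1)) S' := by
            intro u v huv
            have hcases := (adj_iff hn u v).mp huv
            rcases hS huv with hu | hv
            · by_cases h : u = j
              · subst h
                rcases hcases with ⟨hne, hc | hc⟩
                · right; rw [hc, hS'_def]
                  exact Finset.mem_insert_of_mem (Finset.mem_insert_self _ _)
                · right
                  have hv1 : v = j - 1 := by rw [hc, add_sub_cancel_right]
                  rw [hv1, hS'_def]
                  exact Finset.mem_insert_self _ _
              · left; rw [hS'_def]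
                exact Finset.mem_insert_of_mem (Finset.mem_insert_of_mem
                  (Finset.mem_erase.mpr ⟨h, hu⟩))
            · by_cases h : v = j
              · subst h
                rcases hcases with ⟨hne, hc | hc⟩
                · left
                  have hu1 : u = j - 1 := by rw [hc, add_sub_cancel_right]
                  rw [hu1, hS'_def]
                  exact Finset.mem_insert_self _ _
                · left; rw [hc, hS'_def]
                  exact Finset.mem_insert_of_mem (Finset.mem_insert_self _ _)
              · right; rw [hS'_def]
                exact Finset.mem_insert_of_mem (Finset.mem_insert_of_mem
                  (Finset.mem_erase.mpr ⟨h, hv⟩))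
          have h1 : t ≤ ∑ i ∈ S', a i := hcov S' hS'cov
          have h2 : ∑ i ∈ S', a i ≤ ∑ i ∈ S.erase j, a i := by
            rw [hS'_def]
            calc ∑ i ∈ insert (j-1) (insert (j+1) (S.erase j)), a i
                ≤ ∑ i ∈ insert (j+1) (S.erase j), a i := sum_insert_zero a _ hjprev
              _ ≤ ∑ i ∈ S.erase j, a i := sum_insert_zero a _ hnext
          have h3 : ∑ i ∈ S.erase j, a i = ∑ i ∈ S.erase j, a' i := by
            refine Finset.sum_congr rfl (fun i hi => ?_)
            have : i ≠ j := (Finset.mem_erase.mp hi).1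
            simp [ha', Function.update_of_ne this]
          have h4 : ∑ i ∈ S.erase j, a' i ≤ ∑ i ∈ S, a' i :=
            Finset.sum_le_sum_of_subset (Finset.erase_subset _ _)
          omega
        obtain ⟨l, hl, hlle⟩ := ih t ht a' hsum' hcov'
        exact ⟨l, hl, fun i => le_trans (hlle i) (hle' i)⟩
      · -- good edge {j, j+1}
        have haj : 1 ≤ a j := Nat.pos_of_ne_zero hjpos
        have haj1 : 1 ≤ a (j+1) := Nat.pos_of_ne_zero hnext
        have hne1 : j + 1 ≠ j := add_one_ne hn j
        set a' := fun i => if i = j ∨ i = j + 1 then a i - 1 else a i with ha'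
        have haj' : a' j = a j - 1 := by rw [ha']; dsimp only; rw [if_pos (Or.inl rfl)]
        have haj1' : a' (j+1) = a (j+1) - 1 := by rw [ha']; dsimp only; rw [if_pos (Or.inr rfl)]
        have hoff : ∀ i, i ≠ j → i ≠ j + 1 → a' i = a i := by
          intro i h1 h2
          rw [ha']; dsimp only; rw [if_neg (by tauto)]
        have hle' : ∀ i, a' i ≤ a i := by
          intro i; rw [ha']; dsimp only; split_ifs <;> omega
        have hsum' : ∑ i, a' i ≤ N := by
          have hlt : ∑ i, a' i < ∑ i, a i := by
            refine Finset.sum_lt_sum (fun i _ => hle' i) ⟨j, Finset.mem_univ j, ?_⟩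
            rw [haj']; omega
          omega
        have hcov' : ∀ S, IsVertexCover (cycleGraph (2*n+1)) S → t - 1 ≤ ∑ i ∈ S, a' i := by
          intro S hS
          have hedge : j ∈ S ∨ j + 1 ∈ S := hS (adj_succ hn j)
          by_cases hb : j ∈ S ∧ j + 1 ∈ S
          · obtain ⟨hjS, hj1S⟩ := hb
            set S' := insert (j-1) (S.erase j) with hS'_def
            have hS'cov : IsVertexCover (cycleGraph (2*n+1)) S' := by
              intro u v huv
              have hcases := (adj_iff hn u v).mp huv
              rcases hS huv with hu | hv
              · by_cases h : u = j
                · subst h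
                  rcases hcases with ⟨hne, hc | hc⟩
                  · right; rw [hc, hS'_def]
                    exact Finset.mem_insert_of_mem (Finset.mem_erase.mpr ⟨hne1, hj1S⟩)
                  · right
                    have hv1 : v = j - 1 := by rw [hc, add_sub_cancel_right]
                    rw [hv1, hS'_def]
                    exact Finset.mem_insert_self _ _
                · left; rw [hS'_def]
                  exact Finset.mem_insert_of_mem (Finset.mem_erase.mpr ⟨h, hu⟩)
              · by_cases h : v = j
                · subst h
                  rcases hcases with ⟨hne, hc | hc⟩
                  · left
                    have hu1 : u = j - 1 := by rw [hc, add_sub_cancel_right]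
                    rw [hu1, hS'_def]
                    exact Finset.mem_insert_self _ _
                  · left; rw [hc, hS'_def]
                    exact Finset.mem_insert_of_mem (Finset.mem_erase.mpr ⟨hne1, hj1S⟩)
                · right; rw [hS'_def]
                  exact Finset.mem_insert_of_mem (Finset.mem_erase.mpr ⟨h, hv⟩)
            have h1 : t ≤ ∑ i ∈ S', a i := hcov S' hS'cov
            have h2 : ∑ i ∈ S', a i ≤ ∑ i ∈ S.erase j, a i := by
              rw [hS'_def]; exact sum_insert_zero a _ hjprev
            have hj1e : j + 1 ∈ S.erase j := Finset.mem_erase.mpr ⟨hne1, hj1S⟩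
            have e1 : ∑ i ∈ S.erase j, a i + a j = ∑ i ∈ S, a i :=
              Finset.sum_erase_add _ _ hjS
            have e2 : ∑ i ∈ (S.erase j).erase (j+1), a i + a (j+1) = ∑ i ∈ S.erase j, a i :=
              Finset.sum_erase_add _ _ hj1e
            have e1' : ∑ i ∈ S.erase j, a' i + a' j = ∑ i ∈ S, a' i :=
              Finset.sum_erase_add _ _ hjS
            have e2' : ∑ i ∈ (S.erase j).erase (j+1), a' i + a' (j+1) = ∑ i ∈ S.erase j, a' i :=
              Finset.sum_erase_add _ _ hj1e
            have hcong : ∑ i ∈ (S.erase j).erase (j+1), a' i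
                = ∑ i ∈ (S.erase j).erase (j+1), a i := by
              refine Finset.sum_congr rfl (fun i hi => ?_)
              have hi1 : i ≠ j + 1 := (Finset.mem_erase.mp hi).1
              have hi2 : i ≠ j := (Finset.mem_erase.mp ((Finset.mem_erase.mp hi).2)).1
              exact hoff i hi2 hi1
            omega
          · have hone : (j ∈ S ∧ j + 1 ∉ S) ∨ (j ∉ S ∧ j + 1 ∈ S) := by tauto
            have h1 : t ≤ ∑ i ∈ S, a i := hcov S hS
            rcases hone with ⟨hjS, hj1S⟩ | ⟨hjS, hj1S⟩
            · have e1 : ∑ i ∈ S.erase j, a i + a j = ∑ i ∈ S, a i :=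
                Finset.sum_erase_add _ _ hjS
              have e1' : ∑ i ∈ S.erase j, a' i + a' j = ∑ i ∈ S, a' i :=
                Finset.sum_erase_add _ _ hjS
              have hcong : ∑ i ∈ S.erase j, a' i = ∑ i ∈ S.erase j, a i := by
                refine Finset.sum_congr rfl (fun i hi => ?_)
                have hi2 : i ≠ j := (Finset.mem_erase.mp hi).1
                have hiS : i ∈ S := (Finset.mem_erase.mp hi).2
                have hi1 : i ≠ j + 1 := by intro h; rw [h] at hiS; exact hj1S hiS
                exact hoff i hi2 hi1
              omega
            · have e1 : ∑ i ∈ S.erase (j+1), a i + a (j+1) = ∑ i ∈ S, a i :=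
                Finset.sum_erase_add _ _ hj1S
              have e1' : ∑ i ∈ S.erase (j+1), a' i + a' (j+1) = ∑ i ∈ S, a' i :=
                Finset.sum_erase_add _ _ hj1S
              have hcong : ∑ i ∈ S.erase (j+1), a' i = ∑ i ∈ S.erase (j+1), a i := by
                refine Finset.sum_congr rfl (fun i hi => ?_)
                have hi1 : i ≠ j + 1 := (Finset.mem_erase.mp hi).1
                have hiS : i ∈ S := (Finset.mem_erase.mp hi).2
                have hi2 : i ≠ j := by intro h; rw [h] at hiS; exact hjS hiS
                exact hoff i hi2 hi1
              omega
        obtain ⟨l, hl, hlle⟩ := ih (t-1) (by omega) a' hsum' hcov'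
        refine ⟨j ::ₘ l, by rw [Multiset.card_cons, hl]; omega, ?_⟩
        intro i
        rw [Multiset.map_cons, Multiset.sum_cons, Finsupp.add_apply]
        have h2 := hlle i
        have hev : edgeVec j i = (if j = i then 1 else 0) + (if j + 1 = i then 1 else 0) := by
          rw [edgeVec, Finsupp.add_apply, Finsupp.single_apply, Finsupp.single_apply]
        by_cases h : i = j
        · subst h
          rw [hev, if_pos rfl, if_neg hne1]
          omega
        · by_cases h' : i = j + 1
          · subst h'
            rw [hev, if_neg (fun hh : j = j + 1 => hne1 hh.symm), if_pos rfl]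
            omega
          · rw [hev, if_neg (fun hh : j = i => h hh.symm),
              if_neg (fun hh : j + 1 = i => h' hh.symm)]
            have := hoff i h h'
            omega


end Aux


namespace Aux

variable {K : Type*} [Field K] {n : ℕ}

lemma weight_of_sumSet {N : ℕ} {S : Finset (Fin N)} {t : ℕ} {c : Fin N →₀ ℕ}
    (hc : c ∈ sumSet (fun x : {y // y ∈ S} => Finsupp.single x.1 1) t) :
    ∑ i ∈ S, c i = t := by
  obtain ⟨l, hl, rfl⟩ := hc
  rw [← hl]
  clear hl
  induction l using Multiset.induction with
  | empty => simp
  | cons x l ihl =>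
    rw [Multiset.map_cons, Multiset.sum_cons, Multiset.card_cons]
    have h1 : ∑ i ∈ S, (Finsupp.single (x : Fin N) 1 : Fin N →₀ ℕ) i = 1 := by
      simp only [Finsupp.single_apply]
      rw [Finset.sum_ite_eq]
      simp [x.2]
    have h2 : ∀ i, ((Finsupp.single (x : Fin N) 1
          + (l.map (fun x : {y // y ∈ S} => Finsupp.single x.1 1)).sum : Fin N →₀ ℕ)) i
        = (Finsupp.single (x : Fin N) 1 : Fin N →₀ ℕ) i
          + ((l.map (fun x : {y // y ∈ S} => Finsupp.single x.1 1)).sum) i :=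
      fun i => Finsupp.add_apply _ _ _
    rw [Finset.sum_congr rfl (fun i _ => h2 i), Finset.sum_add_distrib, h1, ihl]
    omega

lemma mem_varIdeal_pow_weight {N : ℕ} {S : Finset (Fin N)} {t : ℕ}
    {f : MvPolynomial (Fin N) K} (hf : f ∈ varIdeal K N S ^ t) :
    ∀ a ∈ f.support, t ≤ ∑ i ∈ S, a i := by
  intro a ha
  rw [varIdeal_pow] at hf
  obtain ⟨c, hc, hca⟩ := mem_ideal_span_monomial_image.mp hf a ha
  have h1 := weight_of_sumSet hc
  have h2 : ∑ i ∈ S, c i ≤ ∑ i ∈ S, a i :=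
    Finset.sum_le_sum (fun i _ => Finsupp.le_def.mp hca i)
  omega

lemma edgeIdeal_eq (hn : 1 ≤ n) :
    edgeIdeal K (cycleGraph (2*n+1))
      = Ideal.span (MImg K (Set.range (edgeVec : Fin (2*n+1) → Fin (2*n+1) →₀ ℕ))) := by
  have hx : ∀ u : Fin (2*n+1), (X u : MvPolynomial (Fin (2*n+1)) K)
      = monomial (Finsupp.single u 1) 1 := fun u => rfl
  unfold edgeIdeal
  congr 1
  ext p
  simp only [Set.mem_setOf_eq, MImg, Set.mem_image, Set.mem_range]
  constructor
  · rintro ⟨i, j, hadj, rfl⟩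
    rcases (adj_iff hn i j).mp hadj with ⟨hne, h | h⟩
    · subst h
      exact ⟨edgeVec i, ⟨i, rfl⟩, by rw [hx i, hx (i+1), monomial_mul, one_mul, edgeVec]⟩
    · subst h
      refine ⟨edgeVec j, ⟨j, rfl⟩, ?_⟩
      have hcomm : Finsupp.single j 1 + Finsupp.single (j+1) 1
          = Finsupp.single (j+1) 1 + Finsupp.single j 1 := add_comm _ _
      rw [hx j, hx (j+1), monomial_mul, one_mul, edgeVec, hcomm]
  · rintro ⟨c, ⟨i, rfl⟩, rfl⟩
    exact ⟨i, i+1, adj_succ hn i, by rw [hx i, hx (i+1), monomial_mul, one_mul, edgeVec]⟩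

lemma edge_pow (hn : 1 ≤ n) (t : ℕ) :
    edgeIdeal K (cycleGraph (2*n+1)) ^ t
      = Ideal.span (MImg K (sumSet (edgeVec : Fin (2*n+1) → Fin (2*n+1) →₀ ℕ) t)) := by
  rw [span_MImg_sumSet, ← edgeIdeal_eq hn]

end Aux

/-- For the edge ideal of the odd cycle `C_{2n+1}`, the symbolic and ordinary
powers agree for `1 ≤ t ≤ n`. -/
theorem symbolicPower_eq_pow_of_le (K : Type*) [Field K] (n t : ℕ)
    (hn : 1 ≤ n) (ht1 : 1 ≤ t) (ht2 : t ≤ n) :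
    symbolicPower K (cycleGraph (2 * n + 1)) t
      = edgeIdeal K (cycleGraph (2 * n + 1)) ^ t := by
  apply le_antisymm
  · intro f hf
    have hmem : ∀ T, IsMinVertexCover (cycleGraph (2*n+1)) T →
        f ∈ varIdeal K (2*n+1) T ^ t := by
      intro T hT
      simp only [symbolicPower, Ideal.mem_iInf] at hf
      exact hf T hT
    rw [Aux.edge_pow hn]
    refine mem_ideal_span_monomial_image.mpr (fun a ha => ?_)
    have hw : ∀ S, IsVertexCover (cycleGraph (2*n+1)) S → t ≤ ∑ i ∈ S, a i := by
      intro S hS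
      obtain ⟨T, hTS, hT⟩ := Aux.exists_min_cover _ S hS
      have h1 := Aux.mem_varIdeal_pow_weight (hmem T hT) a ha
      exact le_trans h1 (Finset.sum_le_sum_of_subset hTS)
    obtain ⟨l, hl, hlle⟩ := Aux.key hn (∑ i, a i) t ht2 (fun i => a i) le_rfl hw
    exact ⟨(l.map Aux.edgeVec).sum, ⟨l, hl, rfl⟩, Finsupp.le_def.mpr hlle⟩
  · unfold symbolicPower
    refine le_iInf (fun S => le_iInf (fun hS => ?_))
    refine Ideal.pow_right_mono ?_ t
    unfold edgeIdeal
    refine Ideal.span_le.mpr ?_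
    rintro p ⟨i, j, hadj, rfl⟩
    rcases hS.1 hadj with hi | hj
    · exact Ideal.mul_mem_right (X j) _ (Ideal.subset_span ⟨i, hi, rfl⟩)
    · exact Ideal.mul_mem_left _ (X i) (Ideal.subset_span ⟨j, hj, rfl⟩)
end
end

section
/- Let C_{2n+1} be the odd cycle on vertices x_1,…,x_{2n+1} and t ≥ 1. If a monomial x^a satisfies w_{V'}(x^a) ≥ t for every minimal vertex cover V' of C_{2n+1}, then (n+1)·deg(x^a) ≥ (2n+1)·t. -/
open MvPolynomial Finset

noncomputable section

lemma ne_succ_mod (m x : ℕ) (hm : 2 ≤ m) (hx : x < m) : x ≠ (x + 1) % m := by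
  rcases Nat.lt_or_ge (x + 1) m with h | h
  · rw [Nat.mod_eq_of_lt h]; omega
  · have hx1 : x + 1 = m := by omega
    rw [hx1, Nat.mod_self]; omega

lemma cycle_min_cover (n : ℕ) (hn : 1 ≤ n) (k : Fin (2*n+1)) :
    IsMinVertexCover (cycleGraph (2*n+1))
      (Finset.univ.filter (fun i : Fin (2*n+1) => ((i.val + k.val) % (2*n+1)) % 2 = 0)) := by
  have hm : 0 < 2*n+1 := by omega
  constructor
  · intro i j hadj
    rw [cycleGraph, SimpleGraph.fromRel_adj] at hadj
    obtain ⟨hne, hrel⟩ := hadj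
    simp only [Finset.mem_filter, Finset.mem_univ, true_and]
    have key : ∀ i j : Fin (2*n+1), (j.val = (i.val + 1) % (2*n+1)) →
        (i.val + k.val) % (2*n+1) % 2 = 0 ∨ (j.val + k.val) % (2*n+1) % 2 = 0 := by
      intro i j hj
      set d := (i.val + k.val) % (2*n+1) with hd
      have hdm : d < 2*n+1 := Nat.mod_lt _ hm
      by_cases hpar : d % 2 = 0
      · exact Or.inl hpar
      · right
        have h1 : (j.val + k.val) % (2*n+1) = (d + 1) % (2*n+1) := by
          rw [hj, Nat.mod_add_mod, hd, Nat.mod_add_mod]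
          congr 1; omega
        have h2 : d + 1 < 2*n+1 := by omega
        rw [h1, Nat.mod_eq_of_lt h2]; omega
    rcases hrel with h | h
    · exact key i j h
    · exact (key j i h).symm
  · intro T hT hcov
    obtain ⟨v, hvS, hvT⟩ := Finset.exists_of_ssubset hT
    have hsub := hT.subset
    have hvd : (v.val + k.val) % (2*n+1) % 2 = 0 := by
      simpa using hvS
    set d := (v.val + k.val) % (2*n+1) with hd
    have hdm : d < 2*n+1 := Nat.mod_lt _ hm
    by_cases hdlt : d < 2*n
    · -- neighbor v+1 is not in S
      set w : Fin (2*n+1) := ⟨(v.val + 1) % (2*n+1), Nat.mod_lt _ hm⟩ with hw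
      have hadj : (cycleGraph (2*n+1)).Adj v w := by
        rw [cycleGraph, SimpleGraph.fromRel_adj]
        refine ⟨?_, Or.inl rfl⟩
        intro h
        exact ne_succ_mod (2*n+1) v.val (by omega) v.isLt (congrArg Fin.val h)
      rcases hcov hadj with h | h
      · exact hvT h
      · have hwS := hsub h
        have hwd : (w.val + k.val) % (2*n+1) % 2 = 0 := by simpa using hwS
        have e0 : (w.val + k.val) % (2*n+1) = (v.val + k.val + 1) % (2*n+1) := by
          show ((v.val + 1) % (2*n+1) + k.val) % (2*n+1) = _
          rw [Nat.mod_add_mod]; congr 1; omega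
        have e1 : (w.val + k.val) % (2*n+1) = d + 1 := by
          rw [e0, ← Nat.mod_add_mod, ← hd]
          exact Nat.mod_eq_of_lt (by omega)
        omega
    · -- d = 2n ; neighbor v-1 not in S
      have hdeq : d = 2*n := by omega
      set u : Fin (2*n+1) := ⟨(v.val + 2*n) % (2*n+1), Nat.mod_lt _ hm⟩ with hu
      have hadj : (cycleGraph (2*n+1)).Adj u v := by
        rw [cycleGraph, SimpleGraph.fromRel_adj]
        have hrel : v.val = (u.val + 1) % (2*n+1) := by
          show v.val = ((v.val + 2*n) % (2*n+1) + 1) % (2*n+1)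
          rw [Nat.mod_add_mod, show v.val + 2*n + 1 = v.val + (2*n+1) by omega,
            Nat.add_mod_right, Nat.mod_eq_of_lt v.isLt]
        refine ⟨?_, Or.inl hrel⟩
        intro h
        rw [h] at hrel
        exact ne_succ_mod (2*n+1) v.val (by omega) v.isLt hrel
      rcases hcov hadj with h | h
      · have huS := hsub h
        have hud : (u.val + k.val) % (2*n+1) % 2 = 0 := by simpa using huS
        have e0 : (u.val + k.val) % (2*n+1) = (v.val + k.val + 2*n) % (2*n+1) := by
          show ((v.val + 2*n) % (2*n+1) + k.val) % (2*n+1) = _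
          rw [Nat.mod_add_mod]; congr 1; omega
        have e1 : (u.val + k.val) % (2*n+1) = 2*n - 1 := by
          rw [e0, ← Nat.mod_add_mod, ← hd, hdeq]
          rw [Nat.mod_eq_sub_mod (by omega), show 2*n + 2*n - (2*n+1) = 2*n-1 by omega]
          exact Nat.mod_eq_of_lt (by omega)
        omega
      · exact hvT h

lemma count_even (n : ℕ) :
    (Finset.univ.filter (fun r : Fin (2*n+1) => r.val % 2 = 0)).card = n + 1 := by
  have himg : Finset.univ.filter (fun r : Fin (2*n+1) => r.val % 2 = 0)
      = (Finset.range (n+1)).image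
          (fun j => (⟨2*j % (2*n+1), Nat.mod_lt _ (by omega)⟩ : Fin (2*n+1))) := by
    ext r
    simp only [mem_filter, mem_univ, true_and, mem_image, mem_range]
    constructor
    · intro h
      refine ⟨r.val / 2, by have := r.isLt; omega, ?_⟩
      have hr := r.isLt
      apply Fin.ext
      show 2 * (r.val / 2) % (2*n+1) = r.val
      rw [Nat.mod_eq_of_lt (by omega)]
      omega
    · rintro ⟨j, hj, rfl⟩
      show (2 * j % (2*n+1)) % 2 = 0
      rw [Nat.mod_eq_of_lt (show 2 * j < 2*n+1 by omega)]
      omega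
  rw [himg, Finset.card_image_of_injOn, Finset.card_range]
  intro x hx y hy h
  simp only [mem_coe, mem_range] at hx hy
  have : 2*x % (2*n+1) = 2*y % (2*n+1) := congrArg Fin.val h
  rw [Nat.mod_eq_of_lt (by omega), Nat.mod_eq_of_lt (by omega)] at this
  omega

lemma count_k (n : ℕ) (i : Fin (2*n+1)) :
    (Finset.univ.filter
      (fun k : Fin (2*n+1) => ((i.val + k.val) % (2*n+1)) % 2 = 0)).card = n + 1 := by
  rw [← count_even n]
  apply Finset.card_nbij' (fun k => i + k) (fun r => r - i)
  · intro k hk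
    simp only [mem_coe, mem_filter, mem_univ, true_and] at hk ⊢
    rwa [Fin.val_add]
  · intro r hr
    simp only [mem_coe, mem_filter, mem_univ, true_and] at hr ⊢
    rw [← Fin.val_add, show i + (r - i) = r by abel]
    exact hr
  · intro k _; exact add_sub_cancel_left i k
  · intro r _; exact add_sub_cancel i r

/-- If a monomial exponent vector `a` on `C_{2n+1}` has weight at least `t` with
respect to every minimal vertex cover, then `(n+1)·deg(x^a) ≥ (2n+1)·t`. -/
theorem deg_lower_bound_of_weights (n t : ℕ) (hn : 1 ≤ n) (ht : 1 ≤ t)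
    (a : Fin (2 * n + 1) → ℕ)
    (hw : ∀ S : Finset (Fin (2 * n + 1)),
      IsMinVertexCover (cycleGraph (2 * n + 1)) S → t ≤ ∑ i ∈ S, a i) :
    (2 * n + 1) * t ≤ (n + 1) * ∑ i, a i := by
  have key : ∀ k : Fin (2*n+1), t ≤ ∑ i ∈ Finset.univ.filter
      (fun i : Fin (2*n+1) => ((i.val + k.val) % (2*n+1)) % 2 = 0), a i :=
    fun k => hw _ (cycle_min_cover n hn k)
  have h1 : (2*n+1) * t ≤ ∑ k : Fin (2*n+1), ∑ i ∈ Finset.univ.filter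
      (fun i : Fin (2*n+1) => ((i.val + k.val) % (2*n+1)) % 2 = 0), a i := by
    calc (2*n+1) * t = ∑ _k : Fin (2*n+1), t := by
          simp [Finset.sum_const, Finset.card_univ, mul_comm]
      _ ≤ _ := Finset.sum_le_sum fun k _ => key k
  have h2 : (∑ k : Fin (2*n+1), ∑ i ∈ Finset.univ.filter
      (fun i : Fin (2*n+1) => ((i.val + k.val) % (2*n+1)) % 2 = 0), a i)
      = (n+1) * ∑ i, a i := by
    simp_rw [Finset.sum_filter]
    rw [Finset.sum_comm]
    have hcnt : ∀ i : Fin (2*n+1), (∑ k : Fin (2*n+1),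
        if ((i.val + k.val) % (2*n+1)) % 2 = 0 then a i else 0) = (n+1) * a i := by
      intro i
      rw [← Finset.sum_filter, Finset.sum_const, count_k n i, smul_eq_mul]
    rw [Finset.sum_congr rfl (fun i _ => hcnt i), ← Finset.mul_sum]
  omega
end
end

section
/- Let I = I(C_{2n+1}) be the edge ideal of the odd cycle C_{2n+1}, and write t = s(n+1) + d with 0 ≤ d ≤ n. Then the monomial m = x_1^{s+d} x_2^{s+d} x_3^s x_4^s ⋯ x_{2n+1}^s belongs to I^(t); in particular, I^(t) contains a nonzero element of degree (2n+1)s + 2d. -/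
open MvPolynomial

noncomputable section

/-- Product of powers of ideal elements lies in the corresponding power of the ideal. -/
lemma my_prod_pow_mem_pow_sum {R : Type*} [CommRing R] {ι : Type*} (I : Ideal R)
    (F : Finset ι) (f : ι → R) (a : ι → ℕ) (h : ∀ i ∈ F, f i ∈ I) :
    (∏ i ∈ F, f i ^ a i) ∈ I ^ (∑ i ∈ F, a i) := by
  classical
  induction F using Finset.induction_on with
  | empty => simp
  | insert _ _ hx ih =>
    rename_i j F0
    rw [Finset.prod_insert hx, Finset.sum_insert hx, pow_add]
    exact Ideal.mul_mem_mul (Ideal.pow_mem_pow (h _ (Finset.mem_insert_self _ _)) _)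
      (ih fun i hi => h i (Finset.mem_insert_of_mem hi))

/-- A monomial lies in the `∑_{i∈S} a i`-th power of the variable ideal of `S`. -/
lemma my_monomial_mem_varIdeal_pow (K : Type*) [Field K] (N : ℕ) (a : Fin N →₀ ℕ)
    (S : Finset (Fin N)) :
    (monomial a (1 : K)) ∈ (varIdeal K N S) ^ (∑ i ∈ S, a i) := by
  classical
  have hX : ∀ i ∈ S, (X i : MvPolynomial (Fin N) K) ∈ varIdeal K N S := by
    intro i hi
    exact Ideal.subset_span ⟨i, by simpa using hi, rfl⟩
  have hfull : (∏ i : Fin N, (X i : MvPolynomial (Fin N) K) ^ a i) = monomial a 1 := by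
    rw [← MvPolynomial.prod_X_pow_eq_monomial]
    exact (Finset.prod_subset (Finset.subset_univ _)
      (fun i _ hi => by simp [Finsupp.notMem_support_iff.mp hi])).symm
  have hsplit : (monomial a (1 : K)) =
      (∏ i ∈ Sᶜ, (X i : MvPolynomial (Fin N) K) ^ a i) *
        (∏ i ∈ S, (X i : MvPolynomial (Fin N) K) ^ a i) := by
    rw [← hfull, mul_comm, Finset.prod_mul_prod_compl]
  rw [hsplit]
  exact Ideal.mul_mem_left _ _ (my_prod_pow_mem_pow_sum _ S _ a hX)

/-- Every vertex cover of the odd cycle `C_{2n+1}` has at least `n+1` vertices. -/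
lemma my_cover_card (n : ℕ) (hn : 1 ≤ n) {S : Finset (Fin (2 * n + 1))}
    (hS : IsVertexCover (cycleGraph (2 * n + 1)) S) : n + 1 ≤ S.card := by
  classical
  have hval1 : ((1 : Fin (2 * n + 1)) : ℕ) = 1 := by
    rw [Fin.val_one']; exact Nat.mod_eq_of_lt (by omega)
  have hadd : ∀ i : Fin (2 * n + 1), ((i + 1 : Fin (2 * n + 1)) : ℕ) = ((i : ℕ) + 1) % (2 * n + 1) := by
    intro i; rw [Fin.val_add, hval1]
  have hne : ∀ i : Fin (2 * n + 1), i ≠ i + 1 := by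
    intro i h
    have h2 := congrArg Fin.val h
    rw [hadd] at h2
    rcases Nat.lt_or_ge ((i : ℕ) + 1) (2 * n + 1) with hlt | hge
    · rw [Nat.mod_eq_of_lt hlt] at h2; omega
    · have hi := i.isLt
      have hv : (i : ℕ) = 2 * n := by omega
      rw [hv] at h2
      rw [Nat.mod_self] at h2
      omega
  set f : Fin (2 * n + 1) → Fin (2 * n + 1) := fun i => if i ∈ S then i else i + 1 with hf
  have hmaps : ∀ i, f i ∈ S := by
    intro i
    by_cases hi : i ∈ S
    · simp [hf, hi]
    · simp only [hf, if_neg hi]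
      have hadj : (cycleGraph (2 * n + 1)).Adj i (i + 1) :=
        (SimpleGraph.fromRel_adj _ _ _).mpr ⟨hne i, Or.inl (hadd i)⟩
      rcases hS hadj with h | h
      · exact absurd h hi
      · exact h
  have key : (Finset.univ : Finset (Fin (2 * n + 1))).card ≤ 2 * S.card := by
    apply Finset.card_le_mul_card_image_of_maps_to (fun i _ => hmaps i)
    intro v _
    have hsub : {i ∈ (Finset.univ : Finset (Fin (2 * n + 1))) | f i = v} ⊆ {v - 1, v} := by
      intro i hi
      simp only [Finset.mem_filter, Finset.mem_univ, true_and] at hi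
      by_cases h : i ∈ S
      · simp only [hf, if_pos h] at hi
        simp [hi]
      · simp only [hf, if_neg h] at hi
        have : i = v - 1 := eq_sub_of_add_eq hi
        simp [this]
    calc {i ∈ (Finset.univ : Finset (Fin (2 * n + 1))) | f i = v}.card
        ≤ ({v - 1, v} : Finset (Fin (2 * n + 1))).card := Finset.card_le_card hsub
      _ ≤ 2 := by
          apply le_trans (Finset.card_insert_le _ _)
          simp
  simp only [Finset.card_univ, Fintype.card_fin] at key
  omega

/-- Writing `t = s(n+1) + d` with `0 ≤ d ≤ n`, the monomial
`x_1^{s+d} x_2^{s+d} x_3^s ⋯ x_{2n+1}^s` lies in `I^(t)`; in particular `I^(t)`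
contains a nonzero element of degree `(2n+1)s + 2d`. -/
theorem monomial_mem_symbolicPower (K : Type*) [Field K] (n s d : ℕ)
    (hn : 1 ≤ n) (hd : d ≤ n) :
    letI a : Fin (2 * n + 1) →₀ ℕ :=
      Finsupp.equivFunOnFinite.symm (fun i => if (i : ℕ) < 2 then s + d else s)
    (monomial a (1 : K)) ∈ symbolicPower K (cycleGraph (2 * n + 1)) (s * (n + 1) + d)
    ∧ (monomial a (1 : K)) ≠ 0
    ∧ (monomial a (1 : K)).totalDegree = (2 * n + 1) * s + 2 * d := by
  classical
  set a : Fin (2 * n + 1) →₀ ℕ :=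
    Finsupp.equivFunOnFinite.symm (fun i => if (i : ℕ) < 2 then s + d else s) with ha
  have hai : ∀ i : Fin (2 * n + 1), a i = s + (if (i : ℕ) < 2 then d else 0) := by
    intro i
    rw [ha, Finsupp.coe_equivFunOnFinite_symm]
    split_ifs <;> omega
  have hval1 : ((1 : Fin (2 * n + 1)) : ℕ) = 1 := by
    rw [Fin.val_one']; exact Nat.mod_eq_of_lt (by omega)
  have hval0 : ((0 : Fin (2 * n + 1)) : ℕ) = 0 := rfl
  refine ⟨?_, ?_, ?_⟩
  · rw [symbolicPower, Ideal.mem_iInf]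
    intro S
    rw [Ideal.mem_iInf]
    intro hSmin
    have hcard := my_cover_card n hn hSmin.1
    have hadj : (cycleGraph (2 * n + 1)).Adj 0 1 := by
      refine (SimpleGraph.fromRel_adj _ _ _).mpr ⟨?_, Or.inl ?_⟩
      · intro h
        have := congrArg Fin.val h
        rw [hval0, hval1] at this
        omega
      · rw [hval0, hval1]
        exact (Nat.mod_eq_of_lt (by omega)).symm
    have hj : ∃ j ∈ S, (j : ℕ) < 2 := by
      rcases hSmin.1 hadj with h | h
      · exact ⟨0, h, by omega⟩
      · exact ⟨1, h, by rw [hval1]; omega⟩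
    obtain ⟨j, hjS, hj2⟩ := hj
    have hsum : s * (n + 1) + d ≤ ∑ i ∈ S, a i := by
      have h1 : ∑ i ∈ S, a i
          = s * S.card + ∑ i ∈ S, (if (i : ℕ) < 2 then d else 0) := by
        rw [Finset.sum_congr rfl (fun i _ => hai i), Finset.sum_add_distrib,
          Finset.sum_const, smul_eq_mul, mul_comm]
      have h2 : d ≤ ∑ i ∈ S, (if (i : ℕ) < 2 then d else 0) := by
        have := Finset.single_le_sum
          (f := fun i : Fin (2 * n + 1) => if (i : ℕ) < 2 then d else 0)
          (fun i _ => Nat.zero_le _) hjS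
        rwa [if_pos hj2] at this
      have h3 : s * (n + 1) ≤ s * S.card := Nat.mul_le_mul_left s hcard
      omega
    exact Ideal.pow_le_pow_right hsum (my_monomial_mem_varIdeal_pow K _ a S)
  · simp [MvPolynomial.monomial_eq_zero]
  · rw [MvPolynomial.totalDegree_monomial _ (one_ne_zero)]
    rw [Finsupp.sum_fintype _ _ (fun _ => rfl)]
    rw [Finset.sum_congr rfl (fun i _ => hai i), Finset.sum_add_distrib,
      Finset.sum_const, Finset.card_univ, Fintype.card_fin, smul_eq_mul]
    have hfil : (Finset.univ.filter (fun i : Fin (2 * n + 1) => (i : ℕ) < 2))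
        = {0, 1} := by
      ext i
      simp only [Finset.mem_filter, Finset.mem_univ, true_and, Finset.mem_insert,
        Finset.mem_singleton]
      constructor
      · intro h
        have h' : (i : ℕ) = 0 ∨ (i : ℕ) = 1 := by omega
        rcases h' with h0 | h1
        · exact Or.inl (Fin.ext (by rw [h0, hval0]))
        · exact Or.inr (Fin.ext (by rw [h1, hval1]))
      · rintro (rfl | rfl)
        · rw [hval0]; omega
        · rw [hval1]; omega
    have hne01 : (0 : Fin (2 * n + 1)) ≠ 1 := by
      intro h
      have := congrArg Fin.val h
      rw [hval0, hval1] at this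
      omega
    rw [← Finset.sum_filter, hfil, Finset.sum_pair hne01]
    ring
end
end

section
/- Let K_N be the complete graph on vertices x_1,…,x_N (N ≥ 2) and let I = I(K_N) be its edge ideal. Then for every t ≥ 1, I^t = (L(t)) and consequently I^(t) = I^t + (D(t)). -/
open MvPolynomial

noncomputable section

namespace CGD

open Finset


variable {K : Type*} [Field K] {N : ℕ}

-- abbreviations to mirror the pinned definitions
lemma sum_single_univ (i : Fin N) (c : ℕ) : ∑ v, Finsupp.single i c v = c := by
  simp [Finsupp.single_apply]

lemma sub_single_add (a : Fin N →₀ ℕ) (i : Fin N) (h : 1 ≤ a i) :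
    (a - Finsupp.single i 1) + Finsupp.single i 1 = a := by
  ext v
  by_cases hv : v = i
  · subst hv
    simp [Finsupp.tsub_apply, Finsupp.single_apply, Nat.sub_add_cancel h]
  · simp [Finsupp.tsub_apply, Finsupp.single_apply, Ne.symm hv]

lemma X_mem_varIdeal {S : Finset (Fin N)} {i : Fin N} (hi : i ∈ S) :
    (X i : MvPolynomial (Fin N) K) ∈ varIdeal K N S :=
  Ideal.subset_span ⟨i, by simpa using hi, rfl⟩

lemma monomial_mem_varIdeal_pow (S : Finset (Fin N)) :
    ∀ (t : ℕ) (a : Fin N →₀ ℕ), t ≤ ∑ i ∈ S, a i →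
      monomial a (1 : K) ∈ varIdeal K N S ^ t := by
  intro t
  induction t with
  | zero => intro a _; simp
  | succ t ih =>
    intro a h
    have hpos : 0 < ∑ i ∈ S, a i := lt_of_lt_of_le (Nat.succ_pos t) h
    obtain ⟨i, hiS, hai⟩ : ∃ i ∈ S, a i ≠ 0 :=
      Finset.exists_ne_zero_of_sum_ne_zero hpos.ne'
    have hai' : 1 ≤ a i := Nat.one_le_iff_ne_zero.mpr hai
    set a' := a - Finsupp.single i 1 with ha'
    have hdec : a' + Finsupp.single i 1 = a := sub_single_add a i hai'
    have hsum : (∑ j ∈ S, a' j) + 1 = ∑ j ∈ S, a j := by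
      have h1 : ∑ j ∈ S, a j = (∑ j ∈ S, a' j) + (∑ j ∈ S, Finsupp.single i 1 j) := by
        rw [← hdec]; simp [Finsupp.add_apply, Finset.sum_add_distrib]
      have h2 : ∑ j ∈ S, Finsupp.single i 1 j = 1 := by
        simp [Finsupp.single_apply, hiS]
      omega
    have h' : t ≤ ∑ j ∈ S, a' j := by omega
    have hm : monomial a (1 : K) = monomial a' 1 * X i := by
      rw [X, monomial_mul, mul_one, hdec]
    rw [hm, pow_succ]
    exact Ideal.mul_mem_mul (ih a' h') (X_mem_varIdeal hiS)

lemma varIdeal_pow_le (S : Finset (Fin N)) (t : ℕ) :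
    varIdeal K N S ^ t ≤
      Ideal.span ((fun b => monomial b (1 : K)) '' {b : Fin N →₀ ℕ | t ≤ ∑ i ∈ S, b i}) := by
  induction t with
  | zero =>
    intro f _
    rw [mem_ideal_span_monomial_image]
    intro a _
    exact ⟨0, by simp, zero_le⟩
  | succ t ih =>
    rw [pow_succ]
    calc varIdeal K N S ^ t * varIdeal K N S
        ≤ Ideal.span ((fun b => monomial b (1 : K)) '' {b : Fin N →₀ ℕ | t ≤ ∑ i ∈ S, b i}) *
            varIdeal K N S := Ideal.mul_mono_left ih
      _ ≤ _ := by
        rw [varIdeal, Ideal.span_mul_span', Ideal.span_le]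
        rintro p hp
        rw [Set.mem_mul] at hp
        obtain ⟨x, hx, y, hy, rfl⟩ := hp
        obtain ⟨b, hb, rfl⟩ := hx
        obtain ⟨i, hi, rfl⟩ := hy
        apply Ideal.subset_span
        refine ⟨b + Finsupp.single i 1, ?_, ?_⟩
        · have h1 : ∑ j ∈ S, (b + Finsupp.single i 1 : Fin N →₀ ℕ) j
              = (∑ j ∈ S, b j) + (∑ j ∈ S, Finsupp.single i 1 j) := by
            simp [Finsupp.add_apply, Finset.sum_add_distrib]
          have h2 : ∑ j ∈ S, Finsupp.single i 1 j = 1 := by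
            rw [Finset.mem_coe] at hi
            simp [Finsupp.single_apply, hi]
          have hb' : t ≤ ∑ j ∈ S, b j := hb
          exact Set.mem_setOf.mpr (by omega)
        · simp [X, monomial_mul]

lemma weight_ge_of_mem_varIdeal_pow {S : Finset (Fin N)} {t : ℕ}
    {f : MvPolynomial (Fin N) K} (hf : f ∈ varIdeal K N S ^ t) :
    ∀ a ∈ f.support, t ≤ ∑ i ∈ S, a i := by
  intro a ha
  have := varIdeal_pow_le S t hf
  rw [mem_ideal_span_monomial_image] at this
  obtain ⟨b, hb, hba⟩ := this a ha
  exact le_trans hb (Finset.sum_le_sum fun i _ => hba i)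

lemma erase_isMinVertexCover (v : Fin N) :
    IsMinVertexCover (⊤ : SimpleGraph (Fin N)) (univ.erase v) := by
  constructor
  · intro i j hij
    have hij' : i ≠ j := hij
    by_cases hi : i = v
    · right; exact Finset.mem_erase.mpr ⟨fun h => hij' (h ▸ hi), Finset.mem_univ _⟩
    · left; exact Finset.mem_erase.mpr ⟨hi, Finset.mem_univ _⟩
  · intro T hT hTc
    obtain ⟨w, hw_in, hw_nin⟩ := Finset.exists_of_ssubset hT
    have hwv : w ≠ v := (Finset.mem_erase.mp hw_in).1
    have hvT : v ∉ T := fun h => (Finset.mem_erase.mp (hT.subset h)).1 rfl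
    rcases hTc (show (⊤ : SimpleGraph (Fin N)).Adj w v from hwv) with h | h
    · exact hw_nin h
    · exact hvT h

lemma edge_mem_edgeIdeal {G : SimpleGraph (Fin N)} {i j : Fin N} (h : G.Adj i j) :
    (X i * X j : MvPolynomial (Fin N) K) ∈ edgeIdeal K G :=
  Ideal.subset_span ⟨i, j, h, rfl⟩

/-- the key combinatorial lemma -/
lemma monomial_mem_edgeIdeal_pow :
    ∀ (t : ℕ) (a : Fin N →₀ ℕ), 2 * t ≤ ∑ i, a i →
      (∀ v, a v + t ≤ ∑ i, a i) →
      monomial a (1 : K) ∈ edgeIdeal K (⊤ : SimpleGraph (Fin N)) ^ t := by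
  intro t
  induction t with
  | zero => intro a _ _; simp
  | succ t ih =>
    intro a h2 hw
    set Sa := ∑ i, a i with hSa
    have hne : (univ : Finset (Fin N)).Nonempty := by
      rcases Finset.exists_ne_zero_of_sum_ne_zero
        (show Sa ≠ 0 by omega) with ⟨i, hi, _⟩
      exact ⟨i, hi⟩
    obtain ⟨i, -, hi_max⟩ := Finset.exists_max_image univ a hne
    have herase : ∑ v ∈ univ.erase i, a v + a i = Sa :=
      Finset.sum_erase_add univ a (Finset.mem_univ i)
    have hi_wt : a i + (t + 1) ≤ Sa := hw i
    have hesum : t + 1 ≤ ∑ v ∈ univ.erase i, a v := by omega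
    obtain ⟨w, hw_mem, hw_ne⟩ := Finset.exists_ne_zero_of_sum_ne_zero
      (show ∑ v ∈ univ.erase i, a v ≠ 0 by omega)
    have hne' : (univ.erase i).Nonempty := ⟨w, hw_mem⟩
    obtain ⟨j, hj_mem, hj_max⟩ := Finset.exists_max_image (univ.erase i) a hne'
    have hij : i ≠ j := fun h => (Finset.mem_erase.mp hj_mem).1 h.symm
    have haj : 1 ≤ a j := le_trans (Nat.one_le_iff_ne_zero.mpr hw_ne) (hj_max w hw_mem)
    have hai : 1 ≤ a i := le_trans haj (hi_max j (Finset.mem_univ j))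
    have hval : ∀ v, (a - Finsupp.single i 1 - Finsupp.single j 1 : Fin N →₀ ℕ) v
        = a v - (if i = v then 1 else 0) - (if j = v then 1 else 0) := by
      intro v
      simp [Finsupp.tsub_apply, Finsupp.single_apply]
    have hdec : (a - Finsupp.single i 1 - Finsupp.single j 1)
        + Finsupp.single i 1 + Finsupp.single j 1 = a := by
      ext v
      simp only [Finsupp.add_apply, Finsupp.single_apply]
      rw [hval v]
      by_cases hvi : i = v
      · by_cases hvj : j = v
        · exact absurd (hvi.trans hvj.symm) hij
        · simp only [if_pos hvi, if_neg hvj]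
          have h1v : 1 ≤ a v := hvi ▸ hai
          omega
      · by_cases hvj : j = v
        · simp only [if_neg hvi, if_pos hvj]
          have h1v : 1 ≤ a v := hvj ▸ haj
          omega
        · simp only [if_neg hvi, if_neg hvj]
          omega
    set a' := a - Finsupp.single i 1 - Finsupp.single j 1 with ha'
    have hai' : a' i + 1 = a i := by
      have := hval i
      rw [if_pos rfl, if_neg (Ne.symm hij)] at this
      omega
    have haj' : a' j + 1 = a j := by
      have := hval j
      rw [if_neg hij, if_pos rfl] at this
      omega
    have hother : ∀ v, v ≠ i → v ≠ j → a' v = a v := by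
      intro v hvi hvj
      have := hval v
      rw [if_neg (Ne.symm hvi), if_neg (Ne.symm hvj)] at this
      omega
    have hsum' : (∑ v, a' v) + 2 = Sa := by
      have h1 : ∑ v, a v = (∑ v, a' v) + (∑ v, Finsupp.single i 1 v)
          + (∑ v, Finsupp.single j 1 v) := by
        rw [← hdec]; simp [Finsupp.add_apply, Finset.sum_add_distrib]
      rw [sum_single_univ, sum_single_univ] at h1
      omega
    have h2' : 2 * t ≤ ∑ v, a' v := by omega
    have hij_sum : a i + a j ≤ Sa := by
      have := Finset.single_le_sum (f := a) (fun v _ => Nat.zero_le _) hj_mem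
      omega
    have hw' : ∀ v, a' v + t ≤ ∑ u, a' u := by
      intro v
      have hwv := hw v
      by_cases hvi : v = i
      · subst hvi; omega
      · by_cases hvj : v = j
        · subst hvj; omega
        · rw [hother v hvi hvj]
          have havj : a v ≤ a j := hj_max v (Finset.mem_erase.mpr ⟨hvi, Finset.mem_univ _⟩)
          have havi : a j ≤ a i := hi_max j (Finset.mem_univ j)
          by_cases hcase : a j + t + 2 ≤ Sa
          · omega
          · -- tight case: need a v + a i + a j ≤ Sa
            have h3 : a v + a i + a j ≤ Sa := by
              have hsub : ({v, i, j} : Finset (Fin N)).sum a ≤ Sa :=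
                Finset.sum_le_sum_of_subset (Finset.subset_univ _)
              rw [Finset.sum_insert (by simp [hvi, hvj]),
                Finset.sum_insert (by simp [hij]), Finset.sum_singleton] at hsub
              omega
            omega
    have hmem := ih a' h2' hw'
    have hm : monomial a (1 : K) = monomial a' 1 * (X i * X j) := by
      rw [X, X, monomial_mul, monomial_mul, mul_one, mul_one, ← add_assoc, hdec]
    rw [hm, pow_succ]
    exact Ideal.mul_mem_mul hmem
      (edge_mem_edgeIdeal (show (⊤ : SimpleGraph (Fin N)).Adj i j from hij))

lemma sum_single_mem (S : Finset (Fin N)) (i : Fin N) (c : ℕ) :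
    ∑ v ∈ S, Finsupp.single i c v = if i ∈ S then c else 0 := by
  simp [Finsupp.single_apply]

lemma edgeIdeal_le_varIdeal {G : SimpleGraph (Fin N)} {S : Finset (Fin N)}
    (h : IsVertexCover G S) : edgeIdeal K G ≤ varIdeal K N S := by
  rw [edgeIdeal, Ideal.span_le]
  rintro p ⟨i, j, hadj, rfl⟩
  rcases h hadj with hi | hj
  · exact Ideal.mul_mem_right _ _ (X_mem_varIdeal hi)
  · exact Ideal.mul_mem_left _ _ (X_mem_varIdeal hj)

lemma pow_le_spanL (t : ℕ) :
    edgeIdeal K (⊤ : SimpleGraph (Fin N)) ^ t ≤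
      Ideal.span (Lset K (⊤ : SimpleGraph (Fin N)) t) := by
  induction t with
  | zero =>
    have h1 : (1 : MvPolynomial (Fin N) K) ∈ Lset K (⊤ : SimpleGraph (Fin N)) 0 :=
      ⟨0, by simp, by simp, fun S _ => by simp⟩
    have htop : Ideal.span (Lset K (⊤ : SimpleGraph (Fin N)) 0) = ⊤ :=
      (Ideal.eq_top_iff_one _).mpr (Ideal.subset_span h1)
    rw [pow_zero, htop]
    exact le_top
  | succ t ih =>
    rw [pow_succ]
    refine le_trans (Ideal.mul_mono_left ih) ?_
    rw [edgeIdeal, Ideal.span_mul_span', Ideal.span_le]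
    rintro p hp
    rw [Set.mem_mul] at hp
    obtain ⟨x, hx, y, hy, rfl⟩ := hp
    obtain ⟨a, rfl, hdeg, hwS⟩ := hx
    obtain ⟨i, j, hadj, rfl⟩ := hy
    apply Ideal.subset_span
    refine ⟨a + (Finsupp.single i 1 + Finsupp.single j 1), ?_, ?_, ?_⟩
    · rw [X, X, monomial_mul, monomial_mul, mul_one, mul_one]
    · have h1 : ∑ v, (a + (Finsupp.single i 1 + Finsupp.single j 1) : Fin N →₀ ℕ) v
          = (∑ v, a v) + ((∑ v, Finsupp.single i 1 v) + (∑ v, Finsupp.single j 1 v)) := by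
        simp [Finsupp.add_apply, Finset.sum_add_distrib]
      rw [h1, sum_single_univ, sum_single_univ]
      omega
    · intro S hS
      have hcov : i ∈ S ∨ j ∈ S := hS.1 hadj
      have h1 : ∑ v ∈ S, (a + (Finsupp.single i 1 + Finsupp.single j 1) : Fin N →₀ ℕ) v
          = (∑ v ∈ S, a v)
            + ((∑ v ∈ S, Finsupp.single i 1 v) + (∑ v ∈ S, Finsupp.single j 1 v)) := by
        simp [Finsupp.add_apply, Finset.sum_add_distrib]
      have hwa := hwS S hS
      rw [h1, sum_single_mem, sum_single_mem]
      rcases hcov with hc | hc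
      · rw [if_pos hc]; omega
      · rw [if_pos hc]
        by_cases hc' : i ∈ S
        · rw [if_pos hc']; omega
        · rw [if_neg hc']; omega

lemma spanL_le_pow (t : ℕ) :
    Ideal.span (Lset K (⊤ : SimpleGraph (Fin N)) t) ≤
      edgeIdeal K (⊤ : SimpleGraph (Fin N)) ^ t := by
  rw [Ideal.span_le]
  rintro p ⟨a, rfl, hdeg, hwS⟩
  apply monomial_mem_edgeIdeal_pow t a hdeg
  intro v
  have h1 := hwS (univ.erase v) (erase_isMinVertexCover v)
  have h2 : ∑ u ∈ univ.erase v, a u + a v = ∑ u, a u :=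
    Finset.sum_erase_add _ _ (Finset.mem_univ v)
  omega

lemma part1 (t : ℕ) :
    edgeIdeal K (⊤ : SimpleGraph (Fin N)) ^ t
      = Ideal.span (Lset K (⊤ : SimpleGraph (Fin N)) t) :=
  le_antisymm (pow_le_spanL t) (spanL_le_pow t)

lemma part2 (t : ℕ) :
    symbolicPower K (⊤ : SimpleGraph (Fin N)) t
      = edgeIdeal K (⊤ : SimpleGraph (Fin N)) ^ t
        + Ideal.span (Dset K (⊤ : SimpleGraph (Fin N)) t) := by
  apply le_antisymm
  · intro f hf
    have hsupp : ∀ a ∈ f.support, ∀ S : Finset (Fin N),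
        IsMinVertexCover (⊤ : SimpleGraph (Fin N)) S → t ≤ ∑ i ∈ S, a i := by
      intro a ha S hS
      have hfS : f ∈ varIdeal K N S ^ t := by
        rw [symbolicPower] at hf
        exact Ideal.mem_iInf.mp (Ideal.mem_iInf.mp hf S) hS
      exact weight_ge_of_mem_varIdeal_pow hfS a ha
    nth_rewrite 1 [as_sum f]
    apply Submodule.sum_mem
    intro a ha
    have hmono : monomial a (1 : K) ∈
        edgeIdeal K (⊤ : SimpleGraph (Fin N)) ^ t
          + Ideal.span (Dset K (⊤ : SimpleGraph (Fin N)) t) := by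
      rw [Submodule.add_eq_sup]
      by_cases hdeg : 2 * t ≤ ∑ i, a i
      · exact le_sup_left (α := Ideal (MvPolynomial (Fin N) K))
          (by rw [part1 t]
              exact Ideal.subset_span ⟨a, rfl, hdeg, hsupp a ha⟩)
      · exact le_sup_right (α := Ideal (MvPolynomial (Fin N) K))
          (Ideal.subset_span ⟨a, rfl, Nat.lt_of_not_le hdeg, hsupp a ha⟩)
    have : monomial a (coeff a f) = C (coeff a f) * monomial a (1 : K) := by
      rw [C_mul_monomial, mul_one]
    rw [this]
    exact Ideal.mul_mem_left _ _ hmono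
  · rw [symbolicPower]
    refine le_iInf fun S => le_iInf fun hS => ?_
    rw [Submodule.add_eq_sup, sup_le_iff]
    constructor
    · exact le_trans (Ideal.pow_right_mono (edgeIdeal_le_varIdeal hS.1) t) le_rfl
    · rw [Ideal.span_le]
      rintro p ⟨a, rfl, hdeg, hwS⟩
      exact monomial_mem_varIdeal_pow S t a (hwS S hS)


end CGD

/-- For the complete graph `K_N` (`N ≥ 2`), `I^t = (L(t))` and consequently
`I^(t) = I^t + (D(t))`. -/
theorem completeGraph_decomposition (K : Type*) [Field K] (N t : ℕ)
    (hN : 2 ≤ N) (ht : 1 ≤ t) :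
    edgeIdeal K (⊤ : SimpleGraph (Fin N)) ^ t
        = Ideal.span (Lset K (⊤ : SimpleGraph (Fin N)) t)
    ∧ symbolicPower K (⊤ : SimpleGraph (Fin N)) t
        = edgeIdeal K (⊤ : SimpleGraph (Fin N)) ^ t
          + Ideal.span (Dset K (⊤ : SimpleGraph (Fin N)) t) :=
  ⟨CGD.part1 t, CGD.part2 t⟩
end
end
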